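/- arXiv:math/0507355 — 3 statements merged into one kernel-verified Lean document; each statement's English description precedes it below -/
import Mathlib

section
/- Let Γ be a Bieberbach group of dimension n with translation lattice A, holonomy group H = Γ/A, and holonomy representation φ: H → Aut(A). Then the outer automorphism group Out(Γ) = Aut(Γ)/Inn(Γ) is finite if and only if the normalizer of the image φ(H) in Aut(A) is finite. -/
set_option linter.unusedSectionVars false

/-- Old Mathlib `Monoid.IsTorsionFree` (removed): no nontrivial element has finite order. -/
def Monoid.IsTorsionFree (G : Type*) [Monoid G] : Prop :=
  ∀ g : G, g ≠ 1 → ¬IsOfFinOrder g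
set_option maxHeartbeats 1000000

open scoped IsMulCommutative


lemma group_fg_subgroup_of_equiv_mult {F : Type*} [Group F] {V : Type*} [AddCommGroup V]
    [Module.Finite ℤ V] (e : F ≃* Multiplicative V) (W : Subgroup F) : Group.FG ↥W := by
  set W' : Subgroup (Multiplicative V) := W.map (e : F →* Multiplicative V) with hW'
  have hfg : W'.FG := by
    set P : AddSubgroup V := Subgroup.toAddSubgroup' W' with hP
    have h2 := IsNoetherian.noetherian (AddSubgroup.toIntSubmodule P)
    rw [Submodule.fg_iff_addSubgroup_fg, AddSubgroup.toIntSubmodule_toAddSubgroup] at h2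
    have h3 : P.FG := h2
    rw [AddSubgroup.fg_iff_mul_fg] at h3
    have hPW : AddSubgroup.toSubgroup P = W' := by ext x; rfl
    rwa [hPW] at h3
  haveI : Group.FG ↥W' := (Group.fg_iff_subgroup_fg W').mpr hfg
  exact Group.fg_of_surjective (f := ((MulEquiv.subgroupMap e W).symm : ↥W' →* ↥W))
    (MulEquiv.surjective _)


section Bieberbach

variable {Γ : Type*} [Group Γ]
variable (A : Subgroup Γ)

open Subgroup

lemma aux_le_map (htf : Monoid.IsTorsionFree Γ) [hN : A.Normal] (hfi : A.FiniteIndex)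
    (hmax : Subgroup.centralizer (A : Set Γ) = A) (α : MulAut Γ) :
    A ≤ A.map α.toMonoidHom := by
  intro a ha
  set B := A.map α.toMonoidHom with hB
  -- centralizer of B is contained in B
  have hCB : Subgroup.centralizer (B : Set Γ) ≤ B := by
    intro g hg
    have hc : α⁻¹ g ∈ Subgroup.centralizer (A : Set Γ) := by
      rw [Subgroup.mem_centralizer_iff]
      intro h hh
      have := Subgroup.mem_centralizer_iff.mp hg (α h) ⟨h, hh, rfl⟩
      apply α.injective
      simpa using this
    exact ⟨α⁻¹ g, hmax ▸ hc, by simp⟩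
  apply hCB
  rw [Subgroup.mem_centralizer_iff]
  rintro b hb
  -- b ∈ B, show b * a = a * b
  set k := A.index with hk
  have hk0 : 0 < k := Nat.pos_of_ne_zero hfi.index_ne_zero
  have hbk : b ^ k ∈ A := A.pow_index_mem b
  have hcomm : a * b ^ k = b ^ k * a := by
    have : a ∈ Subgroup.centralizer (A : Set Γ) := by rw [hmax]; exact ha
    exact (Subgroup.mem_centralizer_iff.mp this (b ^ k) hbk).symm
  have habB : a * b * a⁻¹ ∈ B := by
    obtain ⟨b', hb', rfl⟩ := hb
    refine ⟨α⁻¹ a * b' * (α⁻¹ a)⁻¹, hN.conj_mem b' hb' (α⁻¹ a), by simp [mul_assoc]⟩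
  have hBab : ∀ x ∈ B, ∀ y ∈ B, x * y = y * x := by
    rintro x ⟨x', hx', rfl⟩ y ⟨y', hy', rfl⟩
    have hx'c : x' ∈ Subgroup.centralizer (A : Set Γ) := by rw [hmax]; exact hx'
    have h2 := Subgroup.mem_centralizer_iff.mp hx'c y' hy'
    simp only [← map_mul]
    rw [show x' * y' = y' * x' from h2.symm]
  have hc1 : Commute (a * b * a⁻¹) b := hBab _ habB _ hb
  have hcom : Commute (a * b * a⁻¹) b⁻¹ := hc1.inv_right
  have hpow : ((a * b * a⁻¹) * b⁻¹) ^ k = 1 := by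
    rw [hcom.mul_pow, conj_pow]
    have : a * b ^ k * a⁻¹ = b ^ k := by
      rw [hcomm]; group
    rw [this, inv_pow, mul_inv_cancel]
  have h1 : (a * b * a⁻¹) * b⁻¹ = 1 := by
    by_contra h
    exact htf _ h (isOfFinOrder_iff_pow_eq_one.mpr ⟨k, hk0, hpow⟩)
  have : a * b = b * a := by
    have := mul_eq_one_iff_eq_inv.mp h1
    simp only [inv_inv] at this
    calc a * b = (a * b * a⁻¹) * a := by group
    _ = b * a := by rw [this]
  exact this.symm

lemma aux_map_eq (htf : Monoid.IsTorsionFree Γ) [hN : A.Normal] (hfi : A.FiniteIndex)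
    (hmax : Subgroup.centralizer (A : Set Γ) = A) (α : MulAut Γ) :
    A.map α.toMonoidHom = A := by
  refine le_antisymm ?_ (aux_le_map A htf hfi hmax α)
  have h2 := aux_le_map A htf hfi hmax α⁻¹
  rw [Subgroup.map_le_iff_le_comap]
  intro a ha
  obtain ⟨b, hb, hba⟩ := h2 ha
  simpa [Subgroup.mem_comap, ← hba] using hb

end Bieberbach

section Bieberbach

variable {Γ : Type*} [Group Γ]
variable (A : Subgroup Γ) [hN : A.Normal]

open Subgroup

/-- Restriction of an automorphism to a characteristic subgroup. -/
def restrictAut (hA : ∀ α : MulAut Γ, A.map α.toMonoidHom = A) : MulAut Γ →* MulAut A :=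
  MonoidHom.mk' (fun α => (α.subgroupMap A).trans (MulEquiv.subgroupCongr (hA α)))
    (by intro a b; ext x; rfl)

@[simp] lemma restrictAut_apply (hA : ∀ α : MulAut Γ, A.map α.toMonoidHom = A)
    (α : MulAut Γ) (x : A) : (restrictAut A hA α x : Γ) = α ↑x := rfl

lemma le_comap_of_char (hA : ∀ α : MulAut Γ, A.map α.toMonoidHom = A) (α : MulAut Γ) :
    A ≤ A.comap α.toMonoidHom :=
  Subgroup.map_le_iff_le_comap.mp (le_of_eq (hA α))

/-- The induced automorphism on the quotient. -/
def quotAut (hA : ∀ α : MulAut Γ, A.map α.toMonoidHom = A) : MulAut Γ →* MulAut (Γ ⧸ A) :=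
  MonoidHom.mk'
    (fun α =>
      { toFun := QuotientGroup.map A A α.toMonoidHom (le_comap_of_char A hA α)
        invFun := QuotientGroup.map A A (α⁻¹).toMonoidHom (le_comap_of_char A hA α⁻¹)
        left_inv := fun q => by
          induction q using QuotientGroup.induction_on
          simp [QuotientGroup.map_mk]
        right_inv := fun q => by
          induction q using QuotientGroup.induction_on
          simp [QuotientGroup.map_mk]
        map_mul' := fun x y => map_mul _ x y })
    (by intro a b; ext q; induction q using QuotientGroup.induction_on; simp [QuotientGroup.map_mk])

@[simp] lemma quotAut_mk (hA : ∀ α : MulAut Γ, A.map α.toMonoidHom = A)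
    (α : MulAut Γ) (g : Γ) :
    quotAut A hA α (QuotientGroup.mk g) = QuotientGroup.mk (α g) := rfl

/-- The subgroup of automorphisms acting trivially on `A` and on `Γ⧸A`. -/
def KK (hA : ∀ α : MulAut Γ, A.map α.toMonoidHom = A) : Subgroup (MulAut Γ) :=
  ((restrictAut A hA).prod (quotAut A hA)).ker

lemma mem_KK_iff (hA : ∀ α : MulAut Γ, A.map α.toMonoidHom = A) {k : MulAut Γ} :
    k ∈ KK A hA ↔ (∀ a : Γ, a ∈ A → k a = a) ∧ ∀ g : Γ,
      (QuotientGroup.mk (k g) : Γ ⧸ A) = QuotientGroup.mk g := by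
  constructor
  · intro hk
    have h1 : restrictAut A hA k = 1 ∧ quotAut A hA k = 1 := by
      have h0 : ((restrictAut A hA).prod (quotAut A hA)) k = 1 := hk
      exact Prod.ext_iff.mp h0
    constructor
    · intro a ha
      have := congrArg (fun (e : MulAut A) => (e ⟨a, ha⟩ : Γ)) h1.1
      simpa using this
    · intro g
      have := congrArg (fun (e : MulAut (Γ ⧸ A)) => e (QuotientGroup.mk g)) h1.2
      simpa using this
  · rintro ⟨h1, h2⟩
    show ((restrictAut A hA).prod (quotAut A hA)) k = 1
    rw [Prod.ext_iff]
    constructor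
    · ext a
      simpa using h1 ↑a a.2
    · ext q
      induction q using QuotientGroup.induction_on
      simpa using h2 _

lemma KK_normal (hA : ∀ α : MulAut Γ, A.map α.toMonoidHom = A) : (KK A hA).Normal :=
  MonoidHom.normal_ker _

/-- Coboundary homomorphism `A → (Γ⧸A → A)`. -/
def cob1 [IsMulCommutative A] (φ : Γ ⧸ A →* MulAut A) : ↥A →* (Γ ⧸ A → ↥A) :=
  MonoidHom.mk' (fun a => fun x => a * (φ x a)⁻¹)
    (by
      intro a b
      funext x
      simp only [map_mul, mul_inv_rev, Pi.mul_apply]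
      ac_rfl)

lemma mem_A_of_KK (hA : ∀ α : MulAut Γ, A.map α.toMonoidHom = A) (k : ↥(KK A hA)) (g : Γ) :
    (k : MulAut Γ) g * g⁻¹ ∈ A := by
  have h2 := ((mem_KK_iff A hA).mp k.2).2 g
  have h3 : ((k : MulAut Γ) g)⁻¹ * g ∈ A := (QuotientGroup.eq ..).mp h2
  have h4 : g⁻¹ * (k : MulAut Γ) g ∈ A := by
    have := A.inv_mem h3
    simpa using this
  have := hN.conj_mem _ h4 g
  simpa [mul_assoc] using this

/-- The crossed-homomorphism map on `KK`. -/
noncomputable def theta [IsMulCommutative A] (hA : ∀ α : MulAut Γ, A.map α.toMonoidHom = A) :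
    ↥(KK A hA) →* (Γ ⧸ A → ↥A) :=
  MonoidHom.mk'
    (fun k => fun x => ⟨(k : MulAut Γ) x.out * x.out⁻¹, mem_A_of_KK A hA k x.out⟩)
    (by
      intro k l
      funext x
      set g := x.out with hg
      have hkA := ((mem_KK_iff A hA).mp k.2).1
      have hlA : (l : MulAut Γ) g * g⁻¹ ∈ A := mem_A_of_KK A hA l g
      apply Subtype.ext
      show (k : MulAut Γ) ((l : MulAut Γ) g) * g⁻¹
          = ((k : MulAut Γ) g * g⁻¹) * ((l : MulAut Γ) g * g⁻¹)
      have h5 : (k : MulAut Γ) ((l : MulAut Γ) g)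
          = ((l : MulAut Γ) g * g⁻¹) * (k : MulAut Γ) g := by
        conv_lhs => rw [show (l : MulAut Γ) g = ((l : MulAut Γ) g * g⁻¹) * g by group]
        rw [map_mul, hkA _ hlA]
      rw [h5, mul_assoc,
        Subgroup.mul_comm_of_mem_isMulCommutative (H := A) hlA (mem_A_of_KK A hA k g)])

end Bieberbach

section more
variable {Γ : Type*} [Group Γ]
variable (A : Subgroup Γ) [hN : A.Normal]
open Subgroup

@[simp] lemma theta_apply [IsMulCommutative A] (hA : ∀ α : MulAut Γ, A.map α.toMonoidHom = A)
    (k : ↥(KK A hA)) (x : Γ ⧸ A) :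
    (theta A hA k x : Γ) = (k : MulAut Γ) x.out * x.out⁻¹ := rfl

@[simp] lemma cob1_apply [IsMulCommutative A] (φ : Γ ⧸ A →* MulAut A) (a : ↥A) (x : Γ ⧸ A) :
    cob1 A φ a x = a * (φ x a)⁻¹ := rfl

lemma theta_rel [IsMulCommutative A] (hA : ∀ α : MulAut Γ, A.map α.toMonoidHom = A)
    (φ : Γ ⧸ A →* MulAut A) (hφ : ∀ g : Γ, φ (QuotientGroup.mk g) = MulAut.conjNormal g)
    (k : ↥(KK A hA)) (y x : Γ ⧸ A) :
    theta A hA k (y * x) = theta A hA k y * φ y (theta A hA k x) := by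
  set g := y.out with hgdef
  set h := x.out with hhdef
  have hy : (QuotientGroup.mk g : Γ ⧸ A) = y := QuotientGroup.out_eq' y
  have hx : (QuotientGroup.mk h : Γ ⧸ A) = x := QuotientGroup.out_eq' x
  have hkA := ((mem_KK_iff A hA).mp k.2).1
  set w := (y * x).out with hwdef
  have hw : (QuotientGroup.mk w : Γ ⧸ A) = QuotientGroup.mk (g * h) := by
    rw [QuotientGroup.out_eq']
    rw [QuotientGroup.mk_mul, hy, hx]
  have ha0 : (g * h)⁻¹ * w ∈ A := by
    rw [← QuotientGroup.eq]
    exact hw.symm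
  apply Subtype.ext
  show (k : MulAut Γ) w * w⁻¹ = _
  have hφy : φ y = MulAut.conjNormal g := by conv_lhs => rw [← hy, hφ]
  have hrhs : ((theta A hA k y * φ y (theta A hA k x) : ↥A) : Γ)
      = ((k : MulAut Γ) g * g⁻¹) * (g * ((k : MulAut Γ) h * h⁻¹) * g⁻¹) := by
    rw [Subgroup.coe_mul, hφy]
    rw [MulAut.conjNormal_apply]
    rfl
  rw [hrhs]
  have hw2 : w = g * h * ((g * h)⁻¹ * w) := by group
  rw [hw2, map_mul, map_mul, hkA _ ha0]
  group

lemma theta_pow [IsMulCommutative A] [Fintype (Γ ⧸ A)]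
    (hA : ∀ α : MulAut Γ, A.map α.toMonoidHom = A)
    (φ : Γ ⧸ A →* MulAut A) (hφ : ∀ g : Γ, φ (QuotientGroup.mk g) = MulAut.conjNormal g)
    (k : ↥(KK A hA)) :
    ∃ S : ↥A, theta A hA k ^ (Fintype.card (Γ ⧸ A)) = cob1 A φ S := by
  set f := theta A hA k with hf
  set S : ↥A := ∏ x : Γ ⧸ A, f x with hS
  refine ⟨S, ?_⟩
  funext y
  have h1 : ∏ x : Γ ⧸ A, f (y * x) = S :=
    Fintype.prod_equiv (Equiv.mulLeft y) (fun x => f (y * x)) f (fun x => rfl)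
  have h2 : ∏ x : Γ ⧸ A, f (y * x) = f y ^ (Fintype.card (Γ ⧸ A)) * φ y S := by
    calc ∏ x : Γ ⧸ A, f (y * x) = ∏ x : Γ ⧸ A, (f y * φ y (f x)) := by
          refine Finset.prod_congr rfl fun x _ => ?_
          exact theta_rel A hA φ hφ k y x
    _ = (∏ _x : Γ ⧸ A, f y) * ∏ x : Γ ⧸ A, φ y (f x) := Finset.prod_mul_distrib
    _ = f y ^ (Fintype.card (Γ ⧸ A)) * φ y S := by
          rw [Finset.prod_const, Finset.card_univ, ← map_prod]
  have hS2 : S = f y ^ (Fintype.card (Γ ⧸ A)) * φ y S := h1.symm.trans h2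
  show f y ^ (Fintype.card (Γ ⧸ A)) = S * (φ y S)⁻¹
  exact eq_mul_inv_iff_mul_eq.mpr hS2.symm

/-- Inner automorphisms by elements of `A` lie in `KK`. -/
def conjAut [IsMulCommutative A] (hA : ∀ α : MulAut Γ, A.map α.toMonoidHom = A) :
    ↥A →* ↥(KK A hA) :=
  MonoidHom.mk'
    (fun a => ⟨MulAut.conj ↑a, by
      rw [mem_KK_iff]
      constructor
      · intro b hb
        show ↑a * b * (↑a)⁻¹ = b
        have := Subgroup.mul_comm_of_mem_isMulCommutative (H := A) a.2 hb
        rw [this]; group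
      · intro g
        show (QuotientGroup.mk (↑a * g * (↑a)⁻¹) : Γ ⧸ A) = QuotientGroup.mk g
        have h1 : (QuotientGroup.mk (a : Γ) : Γ ⧸ A) = 1 := (QuotientGroup.eq_one_iff _).mpr a.2
        rw [QuotientGroup.mk_mul, QuotientGroup.mk_mul, h1]
        simp⟩)
    (by
      intro a b
      apply Subtype.ext
      show MulAut.conj ((a : Γ) * (b : Γ)) = MulAut.conj (a : Γ) * MulAut.conj (b : Γ)
      rw [map_mul])

@[simp] lemma coe_conjAut [IsMulCommutative A] (hA : ∀ α : MulAut Γ, A.map α.toMonoidHom = A)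
    (a : ↥A) : ((conjAut A hA a : ↥(KK A hA)) : MulAut Γ) = MulAut.conj ↑a := rfl

lemma theta_conjAut [IsMulCommutative A] (hA : ∀ α : MulAut Γ, A.map α.toMonoidHom = A)
    (φ : Γ ⧸ A →* MulAut A) (hφ : ∀ g : Γ, φ (QuotientGroup.mk g) = MulAut.conjNormal g)
    (a : ↥A) : theta A hA (conjAut A hA a) = cob1 A φ a := by
  funext x
  set g0 := x.out with hg0
  have hx : (QuotientGroup.mk g0 : Γ ⧸ A) = x := QuotientGroup.out_eq' x
  have hφx : φ x = MulAut.conjNormal g0 := by conv_lhs => rw [← hx, hφ]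
  apply Subtype.ext
  rw [theta_apply, cob1_apply, Subgroup.coe_mul, hφx, coe_conjAut]
  rw [show ((MulAut.conj (a : Γ)) g0 : Γ) = ↑a * g0 * (↑a)⁻¹ from rfl]
  rw [show (((MulAut.conjNormal g0 a)⁻¹ : ↥A) : Γ) = ((MulAut.conjNormal g0 a : ↥A) : Γ)⁻¹ from rfl]
  rw [MulAut.conjNormal_apply]
  rw [← hg0]
  group

lemma eq_conj_of_theta_eq_cob1 [IsMulCommutative A] (hA : ∀ α : MulAut Γ, A.map α.toMonoidHom = A)
    (φ : Γ ⧸ A →* MulAut A) (hφ : ∀ g : Γ, φ (QuotientGroup.mk g) = MulAut.conjNormal g)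
    (k : ↥(KK A hA)) (a : ↥A) (h : theta A hA k = cob1 A φ a) :
    (k : MulAut Γ) = MulAut.conj ↑a := by
  ext g
  set x : Γ ⧸ A := QuotientGroup.mk g with hx
  set g0 := x.out with hg0
  have hg0x : (QuotientGroup.mk g0 : Γ ⧸ A) = x := QuotientGroup.out_eq' x
  have hd : g * g0⁻¹ ∈ A := by
    have heq : (QuotientGroup.mk g0 : Γ ⧸ A) = QuotientGroup.mk g := by rw [hg0x, hx]
    have h2 := (QuotientGroup.eq ..).mp heq
    have := hN.conj_mem _ h2 g0
    simpa [mul_assoc] using this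
  have hkA := ((mem_KK_iff A hA).mp k.2).1
  have hφx : φ x = MulAut.conjNormal g0 := by conv_lhs => rw [← hg0x, hφ]
  have hth := congrFun h x
  have hth2 : (k : MulAut Γ) g0 * g0⁻¹ = ↑a * (g0 * ↑a * g0⁻¹)⁻¹ := by
    have hv := congrArg (Subtype.val) hth
    rw [theta_apply, cob1_apply, Subgroup.coe_mul, hφx] at hv
    rw [hv]
    rw [show (((MulAut.conjNormal g0 a)⁻¹ : ↥A) : Γ) = ((MulAut.conjNormal g0 a : ↥A) : Γ)⁻¹ from rfl]
    rw [MulAut.conjNormal_apply]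
  have hkg0 : (k : MulAut Γ) g0 = ↑a * g0 * (↑a)⁻¹ := by
    calc (k : MulAut Γ) g0 = ((k : MulAut Γ) g0 * g0⁻¹) * g0 := by group
    _ = (↑a * (g0 * ↑a * g0⁻¹)⁻¹) * g0 := by rw [hth2]
    _ = ↑a * g0 * (↑a)⁻¹ := by group
  have hgd : g = (g * g0⁻¹) * g0 := by group
  show (k : MulAut Γ) g = ↑a * g * (↑a)⁻¹
  conv_lhs => rw [hgd]
  rw [map_mul, hkA _ hd, hkg0]
  conv_rhs => rw [hgd]
  have hcomm := Subgroup.mul_comm_of_mem_isMulCommutative (H := A) hd a.2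
  calc (g * g0⁻¹) * (↑a * g0 * (↑a)⁻¹) = ((g * g0⁻¹) * ↑a) * g0 * (↑a)⁻¹ := by group
  _ = (↑a * (g * g0⁻¹)) * g0 * (↑a)⁻¹ := by rw [hcomm]
  _ = ↑a * ((g * g0⁻¹) * g0) * (↑a)⁻¹ := by group

end more

section dir1
variable {Γ : Type*} [Group Γ]
variable (A : Subgroup Γ) [hN : A.Normal]
open Subgroup

lemma isComm_of_max (hmax : Subgroup.centralizer (A : Set Γ) = A) : IsMulCommutative A := by
  constructor
  constructor
  intro a b
  apply Subtype.ext
  have ha : (a : Γ) ∈ Subgroup.centralizer (A : Set Γ) := by rw [hmax]; exact a.2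
  exact (Subgroup.mem_centralizer_iff.mp ha ↑b b.2).symm

lemma restrict_conj_identity (hA : ∀ α : MulAut Γ, A.map α.toMonoidHom = A)
    (φ : Γ ⧸ A →* MulAut A) (hφ : ∀ g : Γ, φ (QuotientGroup.mk g) = MulAut.conjNormal g)
    (α : MulAut Γ) (x : Γ ⧸ A) :
    restrictAut A hA α * φ x * (restrictAut A hA α)⁻¹ = φ (quotAut A hA α x) := by
  induction x using QuotientGroup.induction_on with
  | H g =>
    rw [quotAut_mk, hφ, hφ]
    ext a
    rw [← map_inv]
    show α ((MulAut.conjNormal g) ((restrictAut A hA α⁻¹) a) : Γ) = _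
    rw [MulAut.conjNormal_apply, MulAut.conjNormal_apply, restrictAut_apply]
    simp [mul_assoc]

lemma restrict_mem_normalizer (hA : ∀ α : MulAut Γ, A.map α.toMonoidHom = A)
    (φ : Γ ⧸ A →* MulAut A) (hφ : ∀ g : Γ, φ (QuotientGroup.mk g) = MulAut.conjNormal g)
    (α : MulAut Γ) : restrictAut A hA α ∈ (Subgroup.normalizer (φ.range : Set (MulAut A))) := by
  rw [Subgroup.mem_normalizer_iff]
  intro h
  constructor
  · rintro ⟨x, rfl⟩
    exact ⟨quotAut A hA α x, (restrict_conj_identity A hA φ hφ α x).symm⟩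
  · rintro ⟨x, hx⟩
    refine ⟨quotAut A hA α⁻¹ x, ?_⟩
    have h2 := restrict_conj_identity A hA φ hφ α⁻¹ x
    rw [map_inv, inv_inv] at h2
    rw [← h2, hx]
    group

lemma conj_range_normal : (MulAut.conj : Γ →* MulAut Γ).range.Normal := by
  constructor
  rintro β ⟨g, rfl⟩ α
  refine ⟨α g, ?_⟩
  ext x
  show α g * x * (α g)⁻¹ = α (g * α⁻¹ x * g⁻¹)
  rw [map_mul, map_mul, map_inv]
  simp

lemma finite_mulaut {X : Type*} [Group X] [Finite X] : Finite (MulAut X) :=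
  Finite.of_injective (fun (e : MulAut X) => (e : X → X)) DFunLike.coe_injective

lemma dir1 {Γ : Type*} [Group Γ] (n : ℕ)
    (htf : Monoid.IsTorsionFree Γ) (A : Subgroup Γ) [hN : A.Normal]
    (hfree : Nonempty (A ≃* Multiplicative (Fin n → ℤ)))
    (hfi : A.FiniteIndex)
    (hmax : Subgroup.centralizer (A : Set Γ) = A)
    (φ : Γ ⧸ A →* MulAut A)
    (hφ : ∀ g : Γ, φ (QuotientGroup.mk g) = MulAut.conjNormal g)
    (hfin : Finite (Subgroup.normalizer (φ.range : Set (MulAut A)))) :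
    Finite (MulAut Γ ⧸ (MulAut.conj : Γ →* MulAut Γ).range) := by
  classical
  have hA : ∀ α : MulAut Γ, A.map α.toMonoidHom = A := aux_map_eq A htf hfi hmax
  haveI : IsMulCommutative A := isComm_of_max A hmax
  haveI : Finite (Γ ⧸ A) := A.finite_quotient_of_finiteIndex
  haveI : Finite (MulAut (Γ ⧸ A)) := finite_mulaut
  set P := (restrictAut A hA).prod (quotAut A hA) with hP
  set K := KK A hA with hK
  haveI : K.Normal := KK_normal A hA
  -- P.range is finite
  have hle : P.range ≤ (Subgroup.normalizer (φ.range : Set (MulAut A))).prod ⊤ := by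
    rintro ⟨u, v⟩ ⟨α, hα⟩
    have h1 : restrictAut A hA α = u := congrArg Prod.fst hα
    exact ⟨h1 ▸ restrict_mem_normalizer A hA φ hφ α, trivial⟩
  haveI : Finite ↥((Subgroup.normalizer (φ.range : Set (MulAut A))).prod (⊤ : Subgroup (MulAut (Γ ⧸ A)))) :=
    Finite.of_equiv _ (Subgroup.prodEquiv _ _).symm.toEquiv
  haveI : Finite ↥P.range := Finite.of_injective (Subgroup.inclusion hle)
    (Subgroup.inclusion_injective hle)
  haveI : Finite (MulAut Γ ⧸ K) :=
    Finite.of_equiv _ (QuotientGroup.quotientKerEquivRange P).symm.toEquiv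
  haveI hKfi : K.FiniteIndex := Subgroup.finiteIndex_of_finite_quotient (H := K)
  set Inn := (MulAut.conj : Γ →* MulAut Γ).range with hInn
  haveI : Inn.Normal := conj_range_normal
  set J := K ⊔ Inn with hJ
  haveI : J.Normal := Subgroup.sup_normal K Inn
  haveI : J.FiniteIndex := Subgroup.finiteIndex_of_le le_sup_left
  set π := QuotientGroup.mk' Inn with hπ
  set L' := J.map π with hL'
  -- the quotient (Out ⧸ L') is finite
  haveI : Finite (MulAut Γ ⧸ J) := J.finite_quotient_of_finiteIndex
  have e2 := QuotientGroup.quotientQuotientEquivQuotient Inn J le_sup_right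
  haveI hfq : Finite ((MulAut Γ ⧸ Inn) ⧸ L') := Finite.of_equiv _ e2.symm.toEquiv
  -- L' is finite
  have hLK : L' = K.map π := by
    rw [hL', hJ, Subgroup.map_sup]
    have : Inn.map π = ⊥ := by
      rw [Subgroup.map_eq_bot_iff, hπ, QuotientGroup.ker_mk']
    rw [this, sup_bot_eq]
  set ψ := π.comp K.subtype with hψ
  have hψr : ψ.range = K.map π := by
    rw [hψ, MonoidHom.range_comp, Subgroup.range_subtype]
  set θ := theta A hA with hθ
  set B1 := (cob1 A φ).range with hB1
  set q := (QuotientGroup.mk' B1).comp θ with hq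
  have hker : q.ker ≤ ψ.ker := by
    intro k hk
    have h1 : θ k ∈ B1 := by
      have h0 : QuotientGroup.mk' B1 (θ k) = 1 := hk
      rwa [← QuotientGroup.ker_mk' B1, MonoidHom.mem_ker]
    obtain ⟨a, ha⟩ := h1
    have h2 : (k : MulAut Γ) = MulAut.conj ↑a :=
      eq_conj_of_theta_eq_cob1 A hA φ hφ k a ha.symm
    show π ↑k = 1
    rw [← MonoidHom.mem_ker, hπ, QuotientGroup.ker_mk']
    exact ⟨↑a, h2.symm⟩
  -- q.range is finite
  haveI hfθ : Group.FG ↥θ.range := by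
    obtain ⟨e0⟩ := hfree
    have e1 : (Γ ⧸ A → ↥A) ≃* Multiplicative (Γ ⧸ A → (Fin n → ℤ)) :=
      (MulEquiv.piCongrRight (fun _ => e0)).trans
        (MulEquiv.piMultiplicative (fun _ : Γ ⧸ A => Fin n → ℤ)).symm
    exact group_fg_subgroup_of_equiv_mult e1 θ.range
  haveI : Finite ↥q.range := by
    have hqr : q.range = θ.range.map (QuotientGroup.mk' B1) := by
      rw [hq, MonoidHom.range_comp]
    rw [hqr]
    haveI : Group.FG ↥(θ.range.map (QuotientGroup.mk' B1)) :=
      Group.fg_of_surjective (f := (QuotientGroup.mk' B1).subgroupMap θ.range)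
        ((QuotientGroup.mk' B1).subgroupMap_surjective θ.range)
    haveI := Fintype.ofFinite (Γ ⧸ A)
    apply CommGroup.finite_of_fg_torsion
    intro y
    rw [isOfFinOrder_iff_pow_eq_one]
    refine ⟨Fintype.card (Γ ⧸ A), Fintype.card_pos, ?_⟩
    obtain ⟨v, hv⟩ := y
    obtain ⟨w, hw, rfl⟩ := hv
    obtain ⟨k, rfl⟩ := hw
    apply Subtype.ext
    show (QuotientGroup.mk' B1 (θ k)) ^ (Fintype.card (Γ ⧸ A)) = 1
    rw [← map_pow, ← MonoidHom.mem_ker, QuotientGroup.ker_mk']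
    obtain ⟨S, hS⟩ := theta_pow A hA φ hφ k
    rw [hS]
    exact ⟨S, rfl⟩
  haveI : Finite (↥K ⧸ q.ker) :=
    Finite.of_equiv _ (QuotientGroup.quotientKerEquivRange q).symm.toEquiv
  haveI : Finite (↥K ⧸ ψ.ker) := by
    have hsurj : Function.Surjective (QuotientGroup.map q.ker ψ.ker (MonoidHom.id ↥K) hker) := by
      intro z
      induction z using QuotientGroup.induction_on with
      | H k => exact ⟨QuotientGroup.mk k, rfl⟩
    exact Finite.of_surjective _ hsurj
  haveI : Finite ↥ψ.range :=
    Finite.of_equiv _ (QuotientGroup.quotientKerEquivRange ψ).toEquiv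
  haveI hfL : Finite ↥L' := by
    rw [hLK, ← hψr]
    infer_instance
  -- conclude
  exact Finite.of_equiv _ (Subgroup.groupEquivQuotientProdSubgroup (s := L')).symm

end dir1

section dir2a
variable {M : Type*} [Group M]
open Subgroup

/-- Conjugation action of the normalizer on a subgroup. -/
def normalizerConj (W : Subgroup M) : ↥(Subgroup.normalizer (W : Set M)) →* MulAut ↥W :=
  MonoidHom.mk'
    (fun u =>
      { toFun := fun h => ⟨↑u * ↑h * (↑u)⁻¹, (Subgroup.mem_normalizer_iff.mp u.2 ↑h).mp h.2⟩
        invFun := fun h => ⟨(↑u)⁻¹ * ↑h * ↑u, by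
          have h2 := (Subgroup.mem_normalizer_iff.mp ((Subgroup.normalizer (W : Set M)).inv_mem u.2) ↑h).mp h.2
          simpa using h2⟩
        left_inv := fun h => by
          apply Subtype.ext
          show (↑u : M)⁻¹ * ((↑u : M) * (↑h : M) * (↑u : M)⁻¹) * (↑u : M) = (↑h : M)
          group
        right_inv := fun h => by
          apply Subtype.ext
          show (↑u : M) * ((↑u : M)⁻¹ * (↑h : M) * (↑u : M)) * (↑u : M)⁻¹ = (↑h : M)
          group
        map_mul' := fun h1 h2 => by
          apply Subtype.ext
          show (↑u : M) * ((↑h1 : M) * (↑h2 : M)) * (↑u : M)⁻¹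
              = ((↑u : M) * ↑h1 * (↑u : M)⁻¹) * ((↑u : M) * ↑h2 * (↑u : M)⁻¹)
          group })
    (by
      intro u v
      ext h
      show (↑(u * v) : M) * ↑h * (↑(u * v) : M)⁻¹
          = (↑u : M) * ((↑v : M) * (↑h : M) * (↑v : M)⁻¹) * (↑u : M)⁻¹
      push_cast
      group)

lemma finite_normalizer_of_finite_centralizer (W : Subgroup M) [Finite ↥W]
    (hC : Finite ↥(Subgroup.centralizer (W : Set M))) : Finite ↥(Subgroup.normalizer (W : Set M)) := by
  haveI : Finite (MulAut ↥W) := finite_mulaut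
  set κ := normalizerConj W with hκ
  haveI : Finite (↥(Subgroup.normalizer (W : Set M)) ⧸ κ.ker) :=
    Finite.of_equiv _ (QuotientGroup.quotientKerEquivRange κ).symm.toEquiv
  haveI : Finite ↥κ.ker := by
    have hinj : Function.Injective
        (fun (u : ↥κ.ker) => (⟨↑↑u, by
          have hu : κ ↑u = 1 := u.2
          rw [Subgroup.mem_centralizer_iff]
          intro h hh
          have := congrArg (fun (e : MulAut ↥W) => ((e ⟨h, hh⟩ : ↥W) : M)) hu
          have h2 : ↑(↑u : ↥(Subgroup.normalizer (W : Set M))) * h * (↑(↑u : ↥(Subgroup.normalizer (W : Set M))))⁻¹ = h := this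
          calc h * ↑↑u = (↑↑u * h * (↑↑u)⁻¹) * ↑↑u := by rw [h2]
          _ = ↑↑u * h := by group⟩ :
          ↥(Subgroup.centralizer (W : Set M)))) := by
      intro u v huv
      have := congrArg Subtype.val huv
      simp only at this
      exact Subtype.ext (Subtype.ext this)
    exact Finite.of_injective _ hinj
  exact Finite.of_equiv _ (Subgroup.groupEquivQuotientProdSubgroup (s := κ.ker)).symm

end dir2a

section dir2b
variable {Γ : Type*} [Group Γ]
variable (A : Subgroup Γ) [hN : A.Normal]
open Subgroup

lemma phi_out (φ : Γ ⧸ A →* MulAut A)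
    (hφ : ∀ g : Γ, φ (QuotientGroup.mk g) = MulAut.conjNormal g) (x : Γ ⧸ A) (a : ↥A) :
    (φ x a : Γ) = x.out * ↑a * x.out⁻¹ := by
  have hx : (QuotientGroup.mk x.out : Γ ⧸ A) = x := QuotientGroup.out_eq' x
  have hφx : φ x = MulAut.conjNormal x.out := by conv_lhs => rw [← hx, hφ]
  rw [hφx, MulAut.conjNormal_apply]

lemma coc_mem (x y : Γ ⧸ A) : x.out * y.out * (x * y).out⁻¹ ∈ A := by
  rw [← QuotientGroup.eq_one_iff]
  rw [QuotientGroup.mk_mul, QuotientGroup.mk_mul, QuotientGroup.mk_inv]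
  rw [QuotientGroup.out_eq', QuotientGroup.out_eq', QuotientGroup.out_eq']
  group

/-- The 2-cocycle of the extension determined by the section `Quotient.out`. -/
noncomputable def coc : (Γ ⧸ A) × (Γ ⧸ A) → ↥A :=
  fun p => ⟨p.1.out * p.2.out * (p.1 * p.2).out⁻¹, coc_mem A p.1 p.2⟩

@[simp] lemma coc_apply (x y : Γ ⧸ A) :
    (coc A (x, y) : Γ) = x.out * y.out * (x * y).out⁻¹ := rfl

/-- The subgroup of 2-cocycles. -/
def Z2 [IsMulCommutative A] (φ : Γ ⧸ A →* MulAut A) : Subgroup ((Γ ⧸ A) × (Γ ⧸ A) → ↥A) where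
  carrier := {f | ∀ x y z : Γ ⧸ A, f (x, y) * f (x * y, z) = φ x (f (y, z)) * f (x, y * z)}
  mul_mem' := by
    intro f g hf hg x y z
    simp only [Pi.mul_apply, map_mul]
    calc f (x,y) * g (x,y) * (f (x*y,z) * g (x*y,z))
        = (f (x,y) * f (x*y,z)) * (g (x,y) * g (x*y,z)) := mul_mul_mul_comm _ _ _ _
    _ = (φ x (f (y,z)) * f (x,y*z)) * (φ x (g (y,z)) * g (x,y*z)) := by rw [hf x y z, hg x y z]
    _ = (φ x (f (y,z)) * φ x (g (y,z))) * (f (x,y*z) * g (x,y*z)) := mul_mul_mul_comm _ _ _ _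
  one_mem' := by intro x y z; simp
  inv_mem' := by
    intro f hf x y z
    simp only [Pi.inv_apply, map_inv, ← mul_inv]
    exact congrArg Inv.inv (hf x y z)

/-- The 2-coboundary homomorphism. -/
def cob2 [IsMulCommutative A] (φ : Γ ⧸ A →* MulAut A) :
    (Γ ⧸ A → ↥A) →* ((Γ ⧸ A) × (Γ ⧸ A) → ↥A) :=
  MonoidHom.mk' (fun b => fun p => b p.1 * φ p.1 (b p.2) * (b (p.1 * p.2))⁻¹)
    (by
      intro b1 b2
      funext p
      simp only [Pi.mul_apply, map_mul, mul_inv]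
      ac_rfl)

@[simp] lemma cob2_apply [IsMulCommutative A] (φ : Γ ⧸ A →* MulAut A) (b : Γ ⧸ A → ↥A)
    (p : (Γ ⧸ A) × (Γ ⧸ A)) : cob2 A φ b p = b p.1 * φ p.1 (b p.2) * (b (p.1 * p.2))⁻¹ := rfl

lemma coc_mem_Z2 [IsMulCommutative A] (φ : Γ ⧸ A →* MulAut A)
    (hφ : ∀ g : Γ, φ (QuotientGroup.mk g) = MulAut.conjNormal g) :
    coc A ∈ Z2 A φ := by
  intro x y z
  apply Subtype.ext
  rw [Subgroup.coe_mul, Subgroup.coe_mul, phi_out A φ hφ, coc_apply, coc_apply, coc_apply,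
    coc_apply, mul_assoc x y z]
  group

lemma z2_pow [IsMulCommutative A] [Fintype (Γ ⧸ A)] (φ : Γ ⧸ A →* MulAut A)
    {f : (Γ ⧸ A) × (Γ ⧸ A) → ↥A} (hf : f ∈ Z2 A φ) :
    ∃ b : Γ ⧸ A → ↥A, f ^ (Fintype.card (Γ ⧸ A)) = cob2 A φ b := by
  set m := Fintype.card (Γ ⧸ A) with hm
  set b : Γ ⧸ A → ↥A := fun x => ∏ z : Γ ⧸ A, f (x, z) with hb
  refine ⟨b, ?_⟩
  funext p
  obtain ⟨x, y⟩ := p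
  have key : ∀ z : Γ ⧸ A, f (x, y) = φ x (f (y, z)) * f (x, y * z) * (f (x * y, z))⁻¹ := by
    intro z
    rw [← hf x y z]
    group
  have h1 : ∏ z : Γ ⧸ A, f (x, y) = f (x, y) ^ m := by rw [Finset.prod_const, Finset.card_univ]
  have h2 : ∏ z : Γ ⧸ A, (φ x (f (y, z)) * f (x, y * z) * (f (x * y, z))⁻¹)
      = φ x (b y) * b x * (b (x * y))⁻¹ := by
    rw [Finset.prod_mul_distrib, Finset.prod_mul_distrib, Finset.prod_inv_distrib]
    congr 1
    · congr 1
      · rw [← map_prod]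
      · exact Fintype.prod_equiv (Equiv.mulLeft y) _ _ (fun z => rfl)
  have h3 : f (x, y) ^ m = φ x (b y) * b x * (b (x * y))⁻¹ := by
    rw [← h1, Finset.prod_congr rfl (fun z _ => key z), h2]
  show f (x, y) ^ m = b x * φ x (b y) * (b (x * y))⁻¹
  rw [h3, mul_comm (φ x (b y)) (b x)]

end dir2b

section dir2c
variable {Γ : Type*} [Group Γ]
variable (A : Subgroup Γ) [hN : A.Normal]
open Subgroup

/-- The `A`-component of `g` w.r.t. the section `Quotient.out`. -/
noncomputable def rr (g : Γ) : ↥A :=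
  ⟨g * (QuotientGroup.mk g : Γ ⧸ A).out⁻¹, by
    rw [← QuotientGroup.eq_one_iff, QuotientGroup.mk_mul, QuotientGroup.mk_inv,
      QuotientGroup.out_eq']
    simp⟩

@[simp] lemma rr_coe (g : Γ) : (rr A g : Γ) = g * (QuotientGroup.mk g : Γ ⧸ A).out⁻¹ := rfl

lemma rr_decomp (g : Γ) : (rr A g : Γ) * (QuotientGroup.mk g : Γ ⧸ A).out = g := by
  rw [rr_coe]; group

lemma mk_one_eq : (QuotientGroup.mk (1 : Γ) : Γ ⧸ A) = 1 :=
  (QuotientGroup.eq_one_iff _).mpr A.one_mem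

lemma rr_mem_eq [IsMulCommutative A] (a : ↥A) : rr A (↑a : Γ) = a * rr A 1 := by
  apply Subtype.ext
  rw [Subgroup.coe_mul, rr_coe, rr_coe]
  rw [show (QuotientGroup.mk (↑a : Γ) : Γ ⧸ A) = 1 from (QuotientGroup.eq_one_iff _).mpr a.2,
    mk_one_eq]
  group

lemma lift_exists [IsMulCommutative A] (φ : Γ ⧸ A →* MulAut A)
    (hφ : ∀ g : Γ, φ (QuotientGroup.mk g) = MulAut.conjNormal g)
    (u : MulAut ↥A) (hu : ∀ (x : Γ ⧸ A) (a : ↥A), u (φ x a) = φ x (u a))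
    (b : Γ ⧸ A → ↥A)
    (hb : ∀ x y : Γ ⧸ A, u (coc A (x, y)) * b (x * y) = coc A (x, y) * (b x * φ x (b y))) :
    ∃ β : MulAut Γ, (∀ a : ↥A, β ↑a = ↑(u a)) ∧
      (∀ g : Γ, (QuotientGroup.mk (β g) : Γ ⧸ A) = QuotientGroup.mk g) := by
  classical
  set β0 : Γ → Γ := fun g =>
    ↑(u (rr A g) * b (QuotientGroup.mk g)) * (QuotientGroup.mk g : Γ ⧸ A).out with hβ0
  -- Step A : cocycle decomposition of rr (g * h)
  have stepA : ∀ g h : Γ, rr A (g * h)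
      = rr A g * φ (QuotientGroup.mk g) (rr A h) *
        coc A (QuotientGroup.mk g, QuotientGroup.mk h) := by
    intro g h
    apply Subtype.ext
    rw [Subgroup.coe_mul, Subgroup.coe_mul, rr_coe, rr_coe, phi_out A φ hφ, rr_coe, coc_apply,
      QuotientGroup.mk_mul]
    group
  -- multiplicativity
  have hmul : ∀ g h : Γ, β0 (g * h) = β0 g * β0 h := by
    intro g h
    set x := (QuotientGroup.mk g : Γ ⧸ A) with hx
    set y := (QuotientGroup.mk h : Γ ⧸ A) with hy
    have hxy : (QuotientGroup.mk (g * h) : Γ ⧸ A) = x * y := QuotientGroup.mk_mul ..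
    have hAeq : u (rr A (g * h)) * b (x * y)
        = (u (rr A g) * b x) * φ x (u (rr A h) * b y) * coc A (x, y) := by
      rw [stepA g h, map_mul, map_mul, hu]
      rw [mul_assoc (u (rr A g) * φ x (u (rr A h)))]
      rw [hb x y]
      rw [map_mul (φ x)]
      simp only [mul_assoc, mul_comm, mul_left_comm]
    have hC : β0 g * β0 h
        = ↑((u (rr A g) * b x) * φ x (u (rr A h) * b y) * coc A (x, y)) * (x * y).out := by
      show (↑(u (rr A g) * b x) * x.out) * (↑(u (rr A h) * b y) * y.out) = _
      simp only [Subgroup.coe_mul, phi_out A φ hφ, coc_apply]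
      group
    show ↑(u (rr A (g * h)) * b (QuotientGroup.mk (g * h))) *
        (QuotientGroup.mk (g * h) : Γ ⧸ A).out = β0 g * β0 h
    rw [hxy, hAeq, hC]
  set f : Γ →* Γ := MonoidHom.mk' β0 hmul with hf
  -- value on the quotient
  have hβmk : ∀ g : Γ, (QuotientGroup.mk (f g) : Γ ⧸ A) = QuotientGroup.mk g := by
    intro g
    show (QuotientGroup.mk (↑(u (rr A g) * b (QuotientGroup.mk g)) *
      (QuotientGroup.mk g : Γ ⧸ A).out) : Γ ⧸ A) = _
    rw [QuotientGroup.mk_mul,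
      (QuotientGroup.eq_one_iff _).mpr (u (rr A g) * b (QuotientGroup.mk g)).2, one_mul,
      QuotientGroup.out_eq']
  -- value on A
  have hone : (↑(u (rr A 1) * b (1 : Γ ⧸ A)) : Γ) * (1 : Γ ⧸ A).out = 1 := by
    have h1 := map_one f
    have h2 : f 1 = ↑(u (rr A 1) * b (QuotientGroup.mk (1 : Γ))) *
        (QuotientGroup.mk (1 : Γ) : Γ ⧸ A).out := rfl
    rw [h2, mk_one_eq] at h1
    exact h1
  have honA : ∀ a : ↥A, f ↑a = ↑(u a) := by
    intro a
    have h2 : f ↑a = ↑(u (rr A ↑a) * b (QuotientGroup.mk (↑a : Γ))) *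
        (QuotientGroup.mk (↑a : Γ) : Γ ⧸ A).out := rfl
    rw [h2, (QuotientGroup.eq_one_iff (↑a : Γ)).mpr a.2, rr_mem_eq, map_mul, mul_assoc,
      Subgroup.coe_mul, mul_assoc]
    rw [hone, mul_one]
  -- injectivity
  have hinj : Function.Injective f := by
    intro g g' hgg'
    have hq : (QuotientGroup.mk g : Γ ⧸ A) = QuotientGroup.mk g' := by
      rw [← hβmk g, ← hβmk g', hgg']
    have h3 : (↑(u (rr A g) * b (QuotientGroup.mk g)) : Γ) *
          (QuotientGroup.mk g : Γ ⧸ A).out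
        = ↑(u (rr A g') * b (QuotientGroup.mk g')) * (QuotientGroup.mk g' : Γ ⧸ A).out := hgg'
    rw [← hq] at h3
    have h4 := mul_right_cancel h3
    have h5 : u (rr A g) * b (QuotientGroup.mk g) = u (rr A g') * b (QuotientGroup.mk g) := by
      apply Subtype.ext
      rw [h4, hq]
    have h6 := mul_right_cancel h5
    have h7 : rr A g = rr A g' := u.injective h6
    rw [← rr_decomp A g, ← rr_decomp A g', h7, hq]
  -- surjectivity
  have hsurj : Function.Surjective f := by
    intro γ
    set x := (QuotientGroup.mk γ : Γ ⧸ A) with hxdef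
    set g : Γ := ↑(u⁻¹ (rr A γ * (b x)⁻¹)) * x.out with hgdef
    have hmkg : (QuotientGroup.mk g : Γ ⧸ A) = x := by
      rw [hgdef, QuotientGroup.mk_mul,
        (QuotientGroup.eq_one_iff _).mpr (u⁻¹ (rr A γ * (b x)⁻¹)).2, one_mul,
        QuotientGroup.out_eq']
    have hrrg : rr A g = u⁻¹ (rr A γ * (b x)⁻¹) := by
      apply Subtype.ext
      rw [rr_coe, hmkg, hgdef]
      group
    refine ⟨g, ?_⟩
    have h2 : f g = ↑(u (rr A g) * b (QuotientGroup.mk g)) *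
        (QuotientGroup.mk g : Γ ⧸ A).out := rfl
    rw [h2, hmkg, hrrg]
    have h8 : u (u⁻¹ (rr A γ * (b x)⁻¹)) = rr A γ * (b x)⁻¹ := by
      show (u * u⁻¹) (rr A γ * (b x)⁻¹) = _
      rw [mul_inv_cancel]
      rfl
    rw [h8, inv_mul_cancel_right]
    exact rr_decomp A γ
  exact ⟨MulEquiv.ofBijective f ⟨hinj, hsurj⟩, honA, hβmk⟩

end dir2c

section dir2d
open Subgroup

/-- Induced automorphisms of a quotient, from a family of automorphisms preserving the
subgroup. -/
def quotAutOf {G : Type*} [Group G] (B : Subgroup G) [B.Normal] {M : Type*} [Group M]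
    (ρ : M →* MulAut G) (hρ : ∀ m : M, B.map (ρ m).toMonoidHom = B) : M →* MulAut (G ⧸ B) :=
  MonoidHom.mk'
    (fun m =>
      { toFun := QuotientGroup.map B B (ρ m).toMonoidHom
          (Subgroup.map_le_iff_le_comap.mp (le_of_eq (hρ m)))
        invFun := QuotientGroup.map B B (ρ m⁻¹).toMonoidHom
          (Subgroup.map_le_iff_le_comap.mp (le_of_eq (hρ m⁻¹)))
        left_inv := fun q => by
          induction q using QuotientGroup.induction_on
          simp [QuotientGroup.map_mk, map_inv]
        right_inv := fun q => by
          induction q using QuotientGroup.induction_on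
          simp [QuotientGroup.map_mk, map_inv]
        map_mul' := fun a b => map_mul _ a b })
    (by
      intro a b
      ext q
      induction q using QuotientGroup.induction_on
      simp [QuotientGroup.map_mk])

@[simp] lemma quotAutOf_mk {G : Type*} [Group G] (B : Subgroup G) [B.Normal] {M : Type*}
    [Group M] (ρ : M →* MulAut G) (hρ : ∀ m : M, B.map (ρ m).toMonoidHom = B) (m : M) (g : G) :
    quotAutOf B ρ hρ m (QuotientGroup.mk g) = QuotientGroup.mk (ρ m g) := rfl

variable {Γ : Type*} [Group Γ] (A : Subgroup Γ) [hN : A.Normal]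

/-- Post-composition action on functions valued in `A`. -/
def bigAct (ι : Type*) : MulAut ↥A →* MulAut (ι → ↥A) :=
  MonoidHom.mk'
    (fun u =>
      { toFun := fun f => fun p => u (f p)
        invFun := fun f => fun p => u⁻¹ (f p)
        left_inv := fun f => by funext p; simp
        right_inv := fun f => by funext p; simp
        map_mul' := fun f g => by funext p; simp })
    (by intro u v; ext f; rfl)

@[simp] lemma bigAct_apply (ι : Type*) (u : MulAut ↥A) (f : ι → ↥A) (p : ι) :
    bigAct A ι u f p = u (f p) := rfl

lemma bigAct_cob2 [IsMulCommutative A] (φ : Γ ⧸ A →* MulAut A) (u : MulAut ↥A)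
    (hu : ∀ (x : Γ ⧸ A) (a : ↥A), u (φ x a) = φ x (u a)) (b : Γ ⧸ A → ↥A) :
    bigAct A _ u (cob2 A φ b) = cob2 A φ (fun x => u (b x)) := by
  funext p
  rw [bigAct_apply, cob2_apply, cob2_apply, map_mul, map_mul, map_inv, hu]

lemma mem_Z2_comp [IsMulCommutative A] (φ : Γ ⧸ A →* MulAut A) (u : MulAut ↥A)
    (hu : ∀ (x : Γ ⧸ A) (a : ↥A), u (φ x a) = φ x (u a))
    {f : (Γ ⧸ A) × (Γ ⧸ A) → ↥A} (hf : f ∈ Z2 A φ) :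
    bigAct A _ u f ∈ Z2 A φ := by
  intro x y z
  show u (f (x,y)) * u (f (x*y,z)) = φ x (u (f (y,z))) * u (f (x, y*z))
  rw [← map_mul, hf x y z, map_mul, hu]

end dir2d

section dir2main
open Subgroup Pointwise

lemma dir2 {Γ : Type*} [Group Γ] (n : ℕ)
    (htf : Monoid.IsTorsionFree Γ) (A : Subgroup Γ) [hN : A.Normal]
    (hfree : Nonempty (A ≃* Multiplicative (Fin n → ℤ)))
    (hfi : A.FiniteIndex)
    (hmax : Subgroup.centralizer (A : Set Γ) = A)
    (φ : Γ ⧸ A →* MulAut A)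
    (hφ : ∀ g : Γ, φ (QuotientGroup.mk g) = MulAut.conjNormal g)
    (hout : Finite (MulAut Γ ⧸ (MulAut.conj : Γ →* MulAut Γ).range)) :
    Finite (Subgroup.normalizer (φ.range : Set (MulAut A))) := by
  classical
  have hA : ∀ α : MulAut Γ, A.map α.toMonoidHom = A := aux_map_eq A htf hfi hmax
  haveI : IsMulCommutative A := isComm_of_max A hmax
  haveI : Finite (Γ ⧸ A) := A.finite_quotient_of_finiteIndex
  haveI := Fintype.ofFinite (Γ ⧸ A)
  haveI : Finite ↥φ.range := Finite.of_surjective φ.rangeRestrict φ.rangeRestrict_surjective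
  set C := Subgroup.centralizer ((φ.range : Subgroup (MulAut ↥A)) : Set (MulAut ↥A)) with hCdef
  have hcomm : ∀ (u : ↥C) (x : Γ ⧸ A) (a : ↥A),
      (↑u : MulAut ↥A) (φ x a) = φ x ((↑u : MulAut ↥A) a) := by
    intro u x a
    have h1 : φ x * ↑u = ↑u * φ x := Subgroup.mem_centralizer_iff.mp u.2 (φ x) ⟨x, rfl⟩
    exact (congrArg (fun e : MulAut ↥A => e a) h1).symm
  set F2 := ((Γ ⧸ A) × (Γ ⧸ A)) → ↥A with hF2
  set ρ : ↥C →* MulAut F2 := (bigAct A ((Γ ⧸ A) × (Γ ⧸ A))).comp C.subtype with hρdef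
  set B2' := (cob2 A φ).range with hB2'
  have hρle : ∀ u : ↥C, B2'.map (ρ u).toMonoidHom ≤ B2' := by
    rintro u w ⟨f, ⟨b, rfl⟩, rfl⟩
    exact ⟨fun x => (↑u : MulAut ↥A) (b x), (bigAct_cob2 A φ ↑u (hcomm u) b).symm⟩
  have hρeq : ∀ u : ↥C, B2'.map (ρ u).toMonoidHom = B2' := by
    intro u
    refine le_antisymm (hρle u) ?_
    intro w hw
    have h1 : ρ u⁻¹ w ∈ B2' := hρle u⁻¹ ⟨w, hw, rfl⟩
    refine ⟨ρ u⁻¹ w, h1, ?_⟩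
    show (ρ u) (ρ u⁻¹ w) = w
    rw [map_inv]
    exact congrArg (fun e : MulAut F2 => e w) (mul_inv_cancel (ρ u))
  letI act : MulAction ↥C (F2 ⧸ B2') := MulAction.compHom _ (quotAutOf B2' ρ hρeq)
  have hsmul : ∀ (u : ↥C) (f : F2), u • (QuotientGroup.mk f : F2 ⧸ B2')
      = QuotientGroup.mk (ρ u f) := fun _ _ => rfl
  set cbar : F2 ⧸ B2' := QuotientGroup.mk (coc A) with hcbar
  set Stab := MulAction.stabilizer ↥C cbar with hStab
  -- finiteness of the image of Z2
  set Z2m := (Z2 A φ).map (QuotientGroup.mk' B2') with hZ2m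
  haveI hfZ2 : Group.FG ↥(Z2 A φ) := by
    obtain ⟨e0⟩ := hfree
    have e1 : F2 ≃* Multiplicative (((Γ ⧸ A) × (Γ ⧸ A)) → (Fin n → ℤ)) :=
      (MulEquiv.piCongrRight (fun _ => e0)).trans
        (MulEquiv.piMultiplicative (fun _ : (Γ ⧸ A) × (Γ ⧸ A) => Fin n → ℤ)).symm
    exact group_fg_subgroup_of_equiv_mult e1 (Z2 A φ)
  haveI hfinZ2m : Finite ↥Z2m := by
    haveI : Group.FG ↥Z2m :=
      Group.fg_of_surjective (f := (QuotientGroup.mk' B2').subgroupMap (Z2 A φ))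
        ((QuotientGroup.mk' B2').subgroupMap_surjective (Z2 A φ))
    apply CommGroup.finite_of_fg_torsion
    intro y
    rw [isOfFinOrder_iff_pow_eq_one]
    refine ⟨Fintype.card (Γ ⧸ A), Fintype.card_pos, ?_⟩
    obtain ⟨v, hv⟩ := y
    obtain ⟨f, hf, rfl⟩ := hv
    apply Subtype.ext
    show (QuotientGroup.mk' B2' f) ^ (Fintype.card (Γ ⧸ A)) = 1
    rw [← map_pow, ← MonoidHom.mem_ker, QuotientGroup.ker_mk']
    obtain ⟨b, hb⟩ := z2_pow A φ hf
    rw [hb]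
    exact ⟨b, rfl⟩
  -- the orbit of the extension class is finite
  have horb : MulAction.orbit ↥C cbar ⊆ (Z2m : Set (F2 ⧸ B2')) := by
    rintro _ ⟨u, rfl⟩
    show u • cbar ∈ (Z2m : Set (F2 ⧸ B2'))
    rw [hcbar, hsmul]
    exact ⟨ρ u (coc A), mem_Z2_comp A φ ↑u (hcomm u) (coc_mem_Z2 A φ hφ), rfl⟩
  haveI : Finite ↥(MulAction.orbit ↥C cbar) := by
    have h1 : (Z2m : Set (F2 ⧸ B2')).Finite := Set.toFinite _
    exact (h1.subset horb).to_subtype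
  haveI : Finite (↥C ⧸ Stab) :=
    Finite.of_equiv _ (MulAction.orbitEquivQuotientStabilizer ↥C cbar)
  -- the target quotient of Aut
  set Inn := (MulAut.conj : Γ →* MulAut Γ).range with hInn
  haveI : Inn.Normal := conj_range_normal
  haveI : (KK A hA).Normal := KK_normal A hA
  set J := KK A hA ⊔ Inn with hJ
  haveI : J.Normal := Subgroup.sup_normal (KK A hA) Inn
  haveI : Finite (MulAut Γ ⧸ J) :=
    Finite.of_equiv _ (QuotientGroup.quotientQuotientEquivQuotient Inn J le_sup_right).toEquiv
  -- lifting stabilizer elements to automorphisms of Γ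
  have hlift : ∀ u : ↥Stab, ∃ β : MulAut Γ,
      (∀ a : ↥A, β ↑a = ↑(((↑u : ↥C) : MulAut ↥A) a)) ∧
      (∀ g : Γ, (QuotientGroup.mk (β g) : Γ ⧸ A) = QuotientGroup.mk g) := by
    intro u
    have hst : (↑u : ↥C) • cbar = cbar := u.2
    rw [hcbar, hsmul] at hst
    have heq : ((ρ ↑u) (coc A))⁻¹ * coc A ∈ B2' := (QuotientGroup.eq).mp hst
    obtain ⟨b0, hb0⟩ := heq
    refine lift_exists A φ hφ ↑↑u (hcomm ↑u) (fun x => (b0 x)⁻¹) ?_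
    intro x y
    have E := congrFun hb0 (x, y)
    simp only [Pi.mul_apply, Pi.inv_apply, cob2_apply] at E
    have E2 : b0 x * φ x (b0 y) * (b0 (x * y))⁻¹
        = ((↑↑u : MulAut ↥A) (coc A (x, y)))⁻¹ * coc A (x, y) := E
    apply mul_right_cancel (b := b0 x * φ x (b0 y))
    have hL : (↑↑u : MulAut ↥A) (coc A (x, y)) * (b0 (x * y))⁻¹ * (b0 x * φ x (b0 y))
        = (↑↑u : MulAut ↥A) (coc A (x, y)) * (b0 x * φ x (b0 y) * (b0 (x * y))⁻¹) := by
      ac_rfl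
    rw [hL, E2, mul_inv_cancel_left]
    simp only [map_inv]
    calc coc A (x, y) = coc A (x, y) * 1 := by rw [mul_one]
    _ = coc A (x, y) * (((b0 x)⁻¹ * (φ x (b0 y))⁻¹) * (b0 x * φ x (b0 y))) := by
        congr 1
        rw [mul_mul_mul_comm, inv_mul_cancel, inv_mul_cancel, one_mul]
    _ = coc A (x, y) * ((b0 x)⁻¹ * (φ x (b0 y))⁻¹) * (b0 x * φ x (b0 y)) := by
        group
  set liftOf : ↥Stab → MulAut Γ := fun u => (hlift u).choose with hlo
  have hlA : ∀ (u : ↥Stab) (a : ↥A), liftOf u ↑a = ↑(((↑u : ↥C) : MulAut ↥A) a) :=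
    fun u => (hlift u).choose_spec.1
  have hlQ : ∀ (u : ↥Stab) (g : Γ), (QuotientGroup.mk (liftOf u g) : Γ ⧸ A) = QuotientGroup.mk g :=
    fun u => (hlift u).choose_spec.2
  have happinv : ∀ (β : MulAut Γ) (g : Γ), β (β⁻¹ g) = g := by
    intro β g
    exact congrArg (fun e : MulAut Γ => e g) (mul_inv_cancel β)
  have hlQinv : ∀ (u : ↥Stab) (g : Γ),
      (QuotientGroup.mk ((liftOf u)⁻¹ g) : Γ ⧸ A) = QuotientGroup.mk g := by
    intro u g
    have h1 := hlQ u ((liftOf u)⁻¹ g)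
    rw [happinv (liftOf u) g] at h1
    exact h1.symm
  have hlAinv : ∀ (u : ↥Stab) (a : ↥A), (liftOf u)⁻¹ ↑a = ↑((((↑u : ↥C) : MulAut ↥A))⁻¹ a) := by
    intro u a
    apply (liftOf u).injective
    rw [happinv (liftOf u) ↑a, hlA u]
    congr 1
    exact (congrArg (fun e : MulAut ↥A => e a) (mul_inv_cancel ((↑u : ↥C) : MulAut ↥A))).symm
  have hmul' : ∀ u v : ↥Stab, ((liftOf u * liftOf v)⁻¹ * liftOf (u * v)) ∈ KK A hA := by
    intro u v
    rw [mem_KK_iff]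
    constructor
    · intro a ha
      have h1' : liftOf (u * v) a
          = ↑(((↑u : ↥C) : MulAut ↥A) (((↑v : ↥C) : MulAut ↥A) ⟨a, ha⟩)) :=
        hlA (u * v) ⟨a, ha⟩
      show (liftOf u * liftOf v)⁻¹ (liftOf (u * v) a) = a
      rw [mul_inv_rev]
      show (liftOf v)⁻¹ ((liftOf u)⁻¹ (liftOf (u * v) a)) = a
      rw [h1', hlAinv u, hlAinv v]
      have h2 : ∀ (e : MulAut ↥A) (z : ↥A), e⁻¹ (e z) = z := by
        intro e z
        exact congrArg (fun w : MulAut ↥A => w z) (inv_mul_cancel e)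
      rw [h2, h2]
    · intro g
      show (QuotientGroup.mk ((liftOf u * liftOf v)⁻¹ (liftOf (u * v) g)) : Γ ⧸ A)
          = QuotientGroup.mk g
      rw [mul_inv_rev]
      show (QuotientGroup.mk ((liftOf v)⁻¹ ((liftOf u)⁻¹ (liftOf (u * v) g))) : Γ ⧸ A) = _
      rw [hlQinv v, hlQinv u, hlQ (u * v)]
  set Λ : ↥Stab →* MulAut Γ ⧸ J := MonoidHom.mk' (fun u => QuotientGroup.mk (liftOf u))
    (by
      intro u v
      show (QuotientGroup.mk (liftOf (u * v)) : MulAut Γ ⧸ J)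
          = QuotientGroup.mk (liftOf u) * QuotientGroup.mk (liftOf v)
      rw [← QuotientGroup.mk_mul]
      rw [QuotientGroup.eq]
      exact J.inv_mem (Subgroup.mem_sup_left (hmul' u v))) with hΛ
  have hker : ∀ w : ↥Stab, w ∈ Λ.ker → ((↑w : ↥C) : MulAut ↥A) ∈ φ.range := by
    intro w hw
    have h1 : liftOf w ∈ J := by
      have h0 : QuotientGroup.mk (liftOf w) = (1 : MulAut Γ ⧸ J) := hw
      exact (QuotientGroup.eq_one_iff _).mp h0
    have h2 : (liftOf w : MulAut Γ) ∈ ((KK A hA : Set (MulAut Γ)) * (Inn : Set (MulAut Γ))) := by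
      rw [← Subgroup.mul_normal]
      exact h1
    obtain ⟨k, hk, i, hi, hki⟩ := h2
    obtain ⟨g, rfl⟩ := hi
    refine ⟨QuotientGroup.mk g, ?_⟩
    rw [hφ]
    ext a
    rw [MulAut.conjNormal_apply]
    have h3 : liftOf w ↑a = g * ↑a * g⁻¹ := by
      rw [← hki]
      show k (MulAut.conj g ↑a) = _
      have h4 : (MulAut.conj g ↑a : Γ) = g * ↑a * g⁻¹ := rfl
      rw [h4]
      exact ((mem_KK_iff A hA).mp hk).1 _ (hN.conj_mem ↑a a.2 g)
    rw [← hlA w a]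
    exact h3.symm
  haveI : Finite ↥Λ.ker := by
    have hinj : Function.Injective
        (fun w : ↥Λ.ker => (⟨((↑↑w : ↥C) : MulAut ↥A), hker ↑w w.2⟩ : ↥φ.range)) := by
      intro w1 w2 h
      have := congrArg Subtype.val h
      simp only at this
      exact Subtype.ext (Subtype.ext (Subtype.ext this))
    exact Finite.of_injective _ hinj
  haveI : Finite ↥Λ.range := Subtype.finite
  haveI : Finite (↥Stab ⧸ Λ.ker) :=
    Finite.of_equiv _ (QuotientGroup.quotientKerEquivRange Λ).symm.toEquiv
  haveI : Finite ↥Stab :=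
    Finite.of_equiv _ (Subgroup.groupEquivQuotientProdSubgroup (s := Λ.ker)).symm
  haveI : Finite ↥C :=
    Finite.of_equiv _ (Subgroup.groupEquivQuotientProdSubgroup (s := Stab)).symm
  exact finite_normalizer_of_finite_centralizer φ.range ‹Finite ↥C›

end dir2main


/-- **Theorem 1 (i) ⟺ (ii).** Let `Γ` be a Bieberbach group of dimension `n`: a torsion-free
group with a normal subgroup `A` that is free abelian of rank `n`, of finite index, and
maximal abelian (equal to its own centralizer).  Let `φ : Γ/A → Aut(A)` be the holonomy
representation (the map induced by conjugation).  Then the outer automorphism group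
`Out(Γ) = Aut(Γ)/Inn(Γ)` is finite if and only if the normalizer of the image `φ(Γ/A)` in
`Aut(A)` is finite. -/
theorem out_finite_iff_normalizer_finite {Γ : Type*} [Group Γ] (n : ℕ)
    (htf : Monoid.IsTorsionFree Γ) (A : Subgroup Γ) [hN : A.Normal]
    (hfree : Nonempty (A ≃* Multiplicative (Fin n → ℤ)))
    (hfi : A.FiniteIndex)
    (hmax : Subgroup.centralizer (A : Set Γ) = A)
    (φ : Γ ⧸ A →* MulAut A)
    (hφ : ∀ g : Γ, φ (QuotientGroup.mk g) = MulAut.conjNormal g) :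
    Finite (MulAut Γ ⧸ (MulAut.conj : Γ →* MulAut Γ).range) ↔
      Finite (Subgroup.normalizer (φ.range : Set (MulAut A))) := by
  constructor
  · intro h
    exact dir2 n htf A hfree hfi hmax φ hφ h
  · intro h
    exact dir1 n htf A hfree hfi hmax φ hφ h
end

section
/- Let n ≥ 2 and let Γ be a Bieberbach group of dimension n whose center is nontrivial. Then there exists a surjective group homomorphism p: Γ → ℤ whose kernel Γ' is a Bieberbach group of dimension n − 1; that is, Γ' is torsion-free and contains a normal subgroup that is free abelian of rank n − 1, of finite index in Γ', and maximal abelian in Γ' (equal to its own centralizer in Γ'). -/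
/-- A group `G` is a *Bieberbach group of dimension `n`* if it is torsion free and has a
normal subgroup `A` that is free abelian of rank `n`, of finite index, and maximal abelian
in `G` (equal to its own centralizer). -/
def IsBieberbach (n : ℕ) (G : Type*) [Group G] : Prop :=
  (∀ g : G, g ≠ 1 → ¬IsOfFinOrder g) ∧
    ∃ A : Subgroup G, A.Normal ∧ Nonempty (A ≃* Multiplicative (Fin n → ℤ)) ∧
      A.FiniteIndex ∧ Subgroup.centralizer (A : Set G) = A

open Module LinearMap in
lemma kerEquivAux (n : ℕ) (hn : 1 ≤ n) (f : (Fin n → ℤ) →ₗ[ℤ] ℤ)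
    (hf : ∃ v, f v ≠ 0) : Nonempty (LinearMap.ker f ≃ₗ[ℤ] (Fin (n-1) → ℤ)) := by
  have hr : finrank ℤ (LinearMap.range f) = 1 := by
    have h1 : finrank ℤ (LinearMap.range f) ≤ 1 := by
      simpa using Submodule.finrank_le (LinearMap.range f)
    have h2 : 0 < finrank ℤ (LinearMap.range f) := by
      rw [Module.finrank_pos_iff]
      obtain ⟨v, hv⟩ := hf
      exact ⟨⟨f v, v, rfl⟩, 0, by simp [Subtype.ext_iff]; exact hv⟩
    omega
  have hk : finrank ℤ (LinearMap.ker f) = n - 1 := by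
    have := Submodule.finrank_quotient_add_finrank (LinearMap.ker f)
    rw [(f.quotKerEquivRange).finrank_eq, hr] at this
    simp [Module.finrank_pi] at this
    omega
  exact ⟨(Module.finBasisOfFinrankEq ℤ _ hk).equivFun⟩



/-- **Calabi's inductive step.**  Let `n ≥ 2` and let `Γ` be a Bieberbach group of dimension
`n` with nontrivial center.  Then there is a surjective homomorphism `p : Γ → ℤ` whose
kernel is a Bieberbach group of dimension `n - 1`; i.e. `Γ` is an extension
`0 → Γ' → Γ → ℤ → 0` of a Bieberbach group `Γ'` of dimension `n - 1` by `ℤ`. -/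
theorem calabi_step {Γ : Type*} [Group Γ] (n : ℕ) (hn : 2 ≤ n)
    (hB : IsBieberbach n Γ) (hcenter : Subgroup.center Γ ≠ ⊥) :
    ∃ p : Γ →* Multiplicative ℤ, Function.Surjective p ∧ IsBieberbach (n - 1) p.ker := by
  obtain ⟨htf, 𝔸, hnorm, ⟨e⟩, hfin, hcent⟩ := hB
  haveI := hfin
  -- zpow injectivity in 𝔸
  have habcomm : ∀ u v : 𝔸, u * v = v * u := by
    intro u v
    apply e.injective
    rw [map_mul, map_mul, mul_comm]
  have hpowinj : ∀ (d : ℤ), d ≠ 0 → ∀ x y : 𝔸, x ^ d = y ^ d → x = y := by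
    intro d hd x y hxy
    apply e.injective
    have : (e x) ^ d = (e y) ^ d := by rw [← map_zpow, ← map_zpow, hxy]
    have h2 : d • (e x).toAdd = d • (e y).toAdd := by
      have h3 := congrArg Multiplicative.toAdd this
      rwa [toAdd_zpow, toAdd_zpow] at h3
    exact Multiplicative.toAdd.injective (smul_right_injective (Fin n → ℤ) hd h2)
  -- central element
  obtain ⟨⟨z, hzc⟩, hz1⟩ := Subgroup.ne_bot_iff_exists_ne_one.mp hcenter
  have hz1' : z ≠ 1 := by simpa [Subtype.ext_iff] using hz1
  have hzA : z ∈ 𝔸 := by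
    rw [← hcent]
    exact Subgroup.mem_centralizer_iff.mpr fun a _ => (Subgroup.mem_center_iff.mp hzc a)
  set z' : 𝔸 := ⟨z, hzA⟩ with hz'
  obtain ⟨i, hi⟩ : ∃ i, (e z').toAdd i ≠ 0 := by
    by_contra h
    push_neg at h
    have : e z' = 1 := by
      apply Multiplicative.toAdd.injective; funext i; exact h i
    exact hz1' (by simpa [Subtype.ext_iff, hz'] using e.injective (this.trans (map_one e).symm))
  -- the coordinate homomorphism and its transfer
  set q₀ : 𝔸 →* Multiplicative ℤ :=
    (AddMonoidHom.toMultiplicative (Pi.evalAddMonoidHom (fun _ : Fin n => ℤ) i)).comp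
      e.toMonoidHom with hq₀
  set P : Γ →* Multiplicative ℤ := MonoidHom.transfer q₀ with hP
  have hm : 𝔸.index ≠ 0 := hfin.index_ne_zero
  have hPz : P z = Multiplicative.ofAdd ((𝔸.index : ℤ) * (e z').toAdd i) := by
    have key : ∀ (k : ℕ) (g₀ : Γ), g₀⁻¹ * z ^ k * g₀ ∈ 𝔸 → g₀⁻¹ * z ^ k * g₀ = z ^ k := by
      intro k g₀ _
      have := Subgroup.mem_center_iff.mp (Subgroup.zpow_mem _ hzc (k : ℤ)) g₀⁻¹
      group at this ⊢
      rw [zpow_natCast] at this ⊢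
      rw [this]
      group
    rw [hP, MonoidHom.transfer_eq_pow q₀ z key]
    have hzm : (⟨z ^ 𝔸.index, MonoidHom.transfer_eq_pow_aux z key⟩ : 𝔸) = z' ^ 𝔸.index := by
      simp [Subtype.ext_iff, hz']
    rw [hzm, map_pow]
    apply Multiplicative.toAdd.injective
    simp [hq₀, mul_comm]
  have hPzne : P z ≠ 1 := by
    rw [hPz]
    simp only [ne_eq, ofAdd_eq_one, mul_eq_zero, not_or]
    exact ⟨by exact_mod_cast hm, hi⟩
  -- the image of P is cyclic, generated by c ≠ 0
  set S : AddSubgroup ℤ := Subgroup.toAddSubgroup' P.range with hS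
  have hmemS : ∀ γ : Γ, (P γ).toAdd ∈ S := fun γ => ⟨γ, rfl⟩
  obtain ⟨c, hc⟩ := Int.subgroup_cyclic S
  have hdvd : ∀ γ : Γ, c ∣ (P γ).toAdd := by
    intro γ
    have := hmemS γ
    rw [hc, AddSubgroup.mem_closure_singleton] at this
    obtain ⟨k, hk⟩ := this
    exact ⟨k, by rw [← hk, smul_eq_mul]; ring⟩
  have hcne : c ≠ 0 := by
    rintro rfl
    have := hmemS z
    rw [hc, AddSubgroup.mem_closure_singleton] at this
    obtain ⟨k, hk⟩ := this
    simp at hk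
    exact hPzne (by apply Multiplicative.toAdd.injective; simpa using hk.symm)
  have hcmem : c ∈ S := by
    rw [hc, AddSubgroup.mem_closure_singleton]; exact ⟨1, one_smul _ _⟩
  obtain ⟨γ₀, hγ₀⟩ : ∃ γ₀ : Γ, (P γ₀).toAdd = c := hcmem
  -- the homomorphism p
  set p : Γ →* Multiplicative ℤ :=
    { toFun := fun γ => Multiplicative.ofAdd ((P γ).toAdd / c)
      map_one' := by simp
      map_mul' := by
        intro x y
        obtain ⟨k1, hk1⟩ := hdvd x
        obtain ⟨k2, hk2⟩ := hdvd y
        apply Multiplicative.toAdd.injective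
        simp only [toAdd_ofAdd, toAdd_mul, map_mul, hk1, hk2, ← mul_add]
        rw [Int.mul_ediv_cancel_left _ hcne, Int.mul_ediv_cancel_left _ hcne,
          Int.mul_ediv_cancel_left _ hcne] } with hp
  have hpval : ∀ γ : Γ, (p γ).toAdd = (P γ).toAdd / c := fun γ => rfl
  have hker : ∀ γ : Γ, γ ∈ p.ker ↔ γ ∈ P.ker := by
    intro γ
    rw [MonoidHom.mem_ker, MonoidHom.mem_ker]
    constructor
    · intro h
      obtain ⟨k, hk⟩ := hdvd γ
      have h2 : (P γ).toAdd / c = 0 := by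
        have := congrArg Multiplicative.toAdd h
        simpa [hpval] using this
      rw [hk, Int.mul_ediv_cancel_left _ hcne] at h2
      apply Multiplicative.toAdd.injective
      simp [hk, h2]
    · intro h
      apply Multiplicative.toAdd.injective
      simp [hpval, h]
  have hsurj : Function.Surjective p := by
    intro t
    refine ⟨γ₀ ^ t.toAdd, ?_⟩
    apply Multiplicative.toAdd.injective
    rw [hpval, map_zpow]
    simp only [toAdd_zpow, hγ₀, smul_eq_mul]
    rw [Int.mul_ediv_cancel _ hcne]
  refine ⟨p, hsurj, ?_⟩
  haveI hknorm : (p.ker ⊓ 𝔸).Normal := by haveI := hnorm; infer_instance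
  refine ⟨?_, (p.ker ⊓ 𝔸).subgroupOf p.ker, hknorm.subgroupOf p.ker, ?_, ?_, ?_⟩
  · -- torsion free
    intro g hg hfo
    exact htf (g : Γ) (fun h => hg (Subtype.ext h)) ((Submonoid.isOfFinOrder_coe).mpr hfo)
  · -- free abelian of rank n - 1
    set F : Multiplicative (Fin n → ℤ) →* Multiplicative ℤ :=
      P.comp (𝔸.subtype.comp e.symm.toMonoidHom) with hF
    set f : (Fin n → ℤ) →ₗ[ℤ] ℤ := (MonoidHom.toAdditive F).toIntLinearMap with hf'
    have hfe : ∀ a : 𝔸, f (e a).toAdd = (P (a : Γ)).toAdd := by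
      intro a
      show (F (Multiplicative.ofAdd (e a).toAdd)).toAdd = _
      simp [hF]
    have hmem1 : ∀ a : 𝔸, ((a : Γ) ∈ p.ker ↔ f (e a).toAdd = 0) := by
      intro a
      rw [hfe, hker, MonoidHom.mem_ker]
      constructor
      · intro h; rw [h]; rfl
      · intro h; apply Multiplicative.toAdd.injective; simpa using h
    have hfne : ∃ v, f v ≠ 0 := by
      refine ⟨(e z').toAdd, ?_⟩
      rw [hfe]
      intro h
      exact hPzne (Multiplicative.toAdd.injective (by simpa using h))
    obtain ⟨E⟩ := kerEquivAux n (by omega) f hfne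
    have eq2 : (p.ker ⊓ 𝔸 : Subgroup Γ) ≃* Multiplicative (LinearMap.ker f) :=
      { toFun := fun x => Multiplicative.ofAdd
          (⟨(e ⟨x.1, (Subgroup.mem_inf.mp x.2).2⟩).toAdd, by
            rw [LinearMap.mem_ker]; exact (hmem1 _).mp (Subgroup.mem_inf.mp x.2).1⟩ :
            LinearMap.ker f)
        invFun := fun v => ⟨((e.symm (Multiplicative.ofAdd ((Multiplicative.toAdd v : LinearMap.ker f) : Fin n → ℤ))) : Γ),
          Subgroup.mem_inf.mpr ⟨(hmem1 _).mpr (by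
            simpa using (Multiplicative.toAdd v : LinearMap.ker f).2),
            SetLike.coe_mem _⟩⟩
        left_inv := by
          intro x
          apply Subtype.ext
          simp
        right_inv := by
          intro v
          apply Multiplicative.toAdd.injective
          apply Subtype.ext
          simp
        map_mul' := by
          intro x y
          apply Multiplicative.toAdd.injective
          apply Subtype.ext
          have h4 : (⟨((x * y : ↥(p.ker ⊓ 𝔸)) : Γ),
              mul_mem (Subgroup.mem_inf.mp x.2).2 (Subgroup.mem_inf.mp y.2).2⟩ : 𝔸) =
              ⟨x.1, (Subgroup.mem_inf.mp x.2).2⟩ * ⟨y.1, (Subgroup.mem_inf.mp y.2).2⟩ :=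
            Subtype.ext rfl
          simp only [toAdd_mul, toAdd_ofAdd, Submodule.coe_add]
          rw [h4, map_mul, toAdd_mul] }
    exact ⟨(Subgroup.subgroupOfEquivOfLe inf_le_left).trans
      (eq2.trans (AddEquiv.toMultiplicative E.toAddEquiv))⟩
  · -- finite index
    constructor
    have h1 : ((p.ker ⊓ 𝔸).subgroupOf p.ker).index = 𝔸.relIndex p.ker := by
      rw [← Subgroup.relIndex, Subgroup.inf_relIndex_left]
    rw [h1]
    intro h0
    have := Subgroup.relIndex_dvd_index_of_normal 𝔸 p.ker
    rw [h0] at this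
    exact hm (zero_dvd_iff.mp this)
  · -- maximal abelian
    ext γ
    rw [Subgroup.mem_centralizer_iff, Subgroup.mem_subgroupOf]
    constructor
    · intro hγ
      refine Subgroup.mem_inf.mpr ⟨γ.2, ?_⟩
      have hγA : (γ : Γ) ∈ Subgroup.centralizer (𝔸 : Set Γ) := by
        rw [Subgroup.mem_centralizer_iff]
        intro a ha
        obtain ⟨dz, hdz⟩ := hdvd z
        have hdzne : dz ≠ 0 := by
          rintro rfl
          rw [mul_zero] at hdz
          exact hPzne (Multiplicative.toAdd.injective (by simpa using hdz))
        obtain ⟨k, hk⟩ := hdvd a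
        set w : Γ := a ^ dz * z ^ (-k) with hw
        have hwA : w ∈ 𝔸 := mul_mem (Subgroup.zpow_mem _ ha _) (Subgroup.zpow_mem _ hzA _)
        have hwker : w ∈ p.ker := by
          rw [hker, MonoidHom.mem_ker]
          apply Multiplicative.toAdd.injective
          rw [hw, map_mul, map_zpow, map_zpow, toAdd_mul, toAdd_zpow, toAdd_zpow, hdz, hk]
          simp only [toAdd_one, smul_eq_mul]
          ring
        have hcomm_w : w * (γ : Γ) = (γ : Γ) * w := by
          have hWmem : (⟨w, hwker⟩ : p.ker) ∈ (p.ker ⊓ 𝔸).subgroupOf p.ker := by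
            rw [Subgroup.mem_subgroupOf]
            exact Subgroup.mem_inf.mpr ⟨hwker, hwA⟩
          have := hγ ⟨w, hwker⟩ hWmem
          exact congrArg Subtype.val this
        have hcomm_z : ∀ j : ℤ, z ^ j * (γ : Γ) = (γ : Γ) * z ^ j := by
          intro j
          exact (Subgroup.mem_center_iff.mp (Subgroup.zpow_mem _ hzc j) (γ : Γ)).symm
        have hadz : a ^ dz = w * z ^ k := by
          rw [hw, mul_assoc, ← zpow_add, neg_add_cancel, zpow_zero, mul_one]
        have hconj : (γ : Γ) * a ^ dz * (γ : Γ)⁻¹ = a ^ dz := by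
          have hc : (w * z ^ k) * (γ : Γ) = (γ : Γ) * (w * z ^ k) := by
            rw [mul_assoc, hcomm_z k, ← mul_assoc, hcomm_w, mul_assoc]
          rw [hadz, ← hc]
          group
        set b : Γ := (γ : Γ) * a * (γ : Γ)⁻¹ with hb
        have hbA : b ∈ 𝔸 := hnorm.conj_mem a ha (γ : Γ)
        have hbd : (⟨b, hbA⟩ : 𝔸) ^ dz = (⟨a, ha⟩ : 𝔸) ^ dz := by
          apply Subtype.ext
          rw [SubgroupClass.coe_zpow, SubgroupClass.coe_zpow]
          show b ^ dz = a ^ dz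
          rw [hb, conj_zpow, hconj]
        have := hpowinj dz hdzne _ _ hbd
        have hba : b = a := congrArg Subtype.val this
        rw [hb] at hba
        conv_lhs => rw [← hba]
        group
      rw [hcent] at hγA
      exact hγA
    · intro h x hx
      have hx' : x ∈ (p.ker ⊓ 𝔸).subgroupOf p.ker := hx
      rw [Subgroup.mem_subgroupOf] at hx' 
      apply Subtype.ext
      have := habcomm ⟨(x : Γ), (Subgroup.mem_inf.mp hx').2⟩ ⟨(γ : Γ), (Subgroup.mem_inf.mp h).2⟩
      have h2 := congrArg Subtype.val this
      exact h2
end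

section
/- For every finite group G there exist a natural number n and a Bieberbach group Γ of dimension n whose holonomy group Γ/A is isomorphic to G; that is, there exist a torsion-free group Γ and a normal subgroup A of Γ such that A is free abelian of rank n, A has finite index in Γ, A is maximal abelian in Γ (equal to its own centralizer), and Γ/A ≅ G. -/
/-- A *Bieberbach group of dimension `n`*: a torsion-free group `carrier` together with a
normal subgroup `A` that is free abelian of rank `n`, of finite index, and maximal abelian
(equal to its own centralizer).  The quotient `carrier ⧸ A` is the holonomy group. -/
structure BieberbachGroup (n : ℕ) where
  carrier : Type
  [grp : Group carrier]
  torsionFree : ∀ g : carrier, g ≠ 1 → ¬IsOfFinOrder g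
  A : @Subgroup carrier grp
  normal : A.Normal
  freeAbelianRank : Nonempty (A ≃* Multiplicative (Fin n → ℤ))
  finiteIndex : A.FiniteIndex
  maxAbelian : Subgroup.centralizer (A : Set carrier) = A

attribute [instance] BieberbachGroup.grp BieberbachGroup.normal

set_option linter.unusedSectionVars false


open Subgroup SemidirectProduct Multiplicative

namespace BieberbachAux

variable {H : Type} [Group H] [Finite H]

/-- The coordinate set: one block `H ⧸ ⟨s⟩` for each `s : H`. -/
abbrev XX (H : Type) [Group H] : Type := Σ s : H, H ⧸ Subgroup.zpowers s

instance : MulAction H (XX H) where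
  smul g x := ⟨x.1, g • x.2⟩
  one_smul := fun ⟨s, x⟩ => by
    show (⟨s, (1:H) • x⟩ : XX H) = ⟨s, x⟩; rw [one_smul]
  mul_smul := fun g h ⟨s, x⟩ => by
    show (⟨s, (g*h) • x⟩ : XX H) = ⟨s, g • (h • x)⟩; rw [mul_smul]

lemma xsmul_def (g : H) (x : XX H) : g • x = ⟨x.1, g • x.2⟩ := rfl

/-- The action of `H` on `Multiplicative (XX H → ℚ)`. -/
def phi (H : Type) [Group H] : H →* MulAut (Multiplicative (XX H → ℚ)) where
  toFun g :=
    { toFun := fun v => ofAdd fun x => v.toAdd (g⁻¹ • x)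
      invFun := fun v => ofAdd fun x => v.toAdd (g • x)
      left_inv := fun v => by
        simp only [toAdd_ofAdd]
        show ofAdd (fun x => v.toAdd (g⁻¹ • g • x)) = v
        exact congrArg ofAdd (funext fun x => congrArg v.toAdd (inv_smul_smul g x))
      right_inv := fun v => by
        simp only [toAdd_ofAdd]
        show ofAdd (fun x => v.toAdd (g • g⁻¹ • x)) = v
        exact congrArg ofAdd (funext fun x => congrArg v.toAdd (smul_inv_smul g x))
      map_mul' := fun v w => by
        show ofAdd (fun x => (v.toAdd + w.toAdd) (g⁻¹ • x)) = _
        rfl }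
  map_one' := by
    ext v x
    show v.toAdd ((1:H)⁻¹ • x) = v.toAdd x
    rw [inv_one, (show (1:H) • x = x from one_smul H x)]
  map_mul' g h := by
    ext v x
    show v.toAdd ((g*h)⁻¹ • x) = v.toAdd (h⁻¹ • g⁻¹ • x)
    rw [mul_inv_rev, (show (h⁻¹ * g⁻¹) • x = h⁻¹ • g⁻¹ • x from mul_smul _ _ x)]

@[simp] lemma phi_apply (g : H) (v : Multiplicative (XX H → ℚ)) (x : XX H) :
    ((phi H g) v).toAdd x = v.toAdd (g⁻¹ • x) := rfl

/-- The ambient semidirect product. -/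
abbrev W (H : Type) [Group H] : Type := Multiplicative (XX H → ℚ) ⋊[phi H] H

/-- Cocycle with values in `zpowers s`. -/
noncomputable def cc (g : H) {s : H} (x : H ⧸ zpowers s) : H :=
  ((g⁻¹ • x).out)⁻¹ * (g⁻¹ * x.out)

lemma cc_mem (g : H) {s : H} (x : H ⧸ zpowers s) : cc g x ∈ zpowers s := by
  have h : (QuotientGroup.mk ((g⁻¹ • x).out) : H ⧸ zpowers s)
      = QuotientGroup.mk (g⁻¹ * x.out) := by
    rw [QuotientGroup.out_eq']
    conv_lhs => rw [← QuotientGroup.out_eq' x]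
    rfl
  exact QuotientGroup.eq.mp h

lemma cc_one {s : H} (x : H ⧸ zpowers s) : cc (1:H) x = 1 := by
  unfold cc
  rw [inv_one, one_smul, one_mul, inv_mul_cancel]

lemma cc_mul (g h : H) {s : H} (x : H ⧸ zpowers s) :
    cc (g * h) x = cc h (g⁻¹ • x) * cc g x := by
  unfold cc
  have h1 : (g * h)⁻¹ • x = h⁻¹ • (g⁻¹ • x) := by rw [mul_inv_rev, mul_smul]
  rw [h1, mul_inv_rev]
  group

/-- An exponent for members of `zpowers s`. -/
noncomputable def ex (s p : H) : ℤ :=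
  if h : p ∈ zpowers s then Classical.choose (Subgroup.mem_zpowers_iff.mp h) else 0

lemma ex_spec {s p : H} (h : p ∈ zpowers s) : s ^ (ex s p) = p := by
  rw [ex, dif_pos h]
  exact Classical.choose_spec (Subgroup.mem_zpowers_iff.mp h)

/-- The additive character `zpowers s → ℚ/ℤ`, as a bare function lifted to `H`. -/
lemma intCast_coe_zero (m : ℤ) : ((m : ℚ) : AddCircle (1:ℚ)) = 0 :=
  (AddCircle.coe_eq_zero_iff (1:ℚ)).mpr ⟨m, by simp⟩

noncomputable def chiQ (s p : H) : ℚ := (ex s p : ℚ) / (orderOf s : ℚ)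

noncomputable def chi (s p : H) : AddCircle (1:ℚ) := (chiQ s p : ℚ)

lemma chi_eq {s p : H} (hp : p ∈ zpowers s) {j : ℤ} (hj : s ^ j = p) :
    chi s p = (((j : ℚ) / (orderOf s : ℚ) : ℚ) : AddCircle (1:ℚ)) := by
  have hk : (0:ℚ) < (orderOf s : ℚ) := by
    exact_mod_cast orderOf_pos s
  have h1 : s ^ (ex s p - j) = 1 := by
    rw [zpow_sub, ex_spec hp, hj, mul_inv_cancel]
  obtain ⟨m, hm⟩ := orderOf_dvd_iff_zpow_eq_one.mpr h1
  have hcast : (ex s p : ℚ) - (j:ℚ) = (orderOf s : ℚ) * (m : ℚ) := by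
    exact_mod_cast congrArg (Int.cast : ℤ → ℚ) hm
  have h2 : chiQ s p = (j : ℚ) / (orderOf s : ℚ) + (m : ℚ) := by
    rw [chiQ]; field_simp; linarith [hcast]
  rw [chi, h2, AddCircle.coe_add, intCast_coe_zero, add_zero]

lemma chi_one (s : H) : chi s (1:H) = 0 := by
  rw [chi_eq (one_mem _) (zpow_zero s)]
  norm_num

lemma chi_mul {s p q : H} (hp : p ∈ zpowers s) (hq : q ∈ zpowers s) :
    chi s (p * q) = chi s p + chi s q := by
  have hpq : p * q ∈ zpowers s := mul_mem hp hq
  have hj : s ^ (ex s p + ex s q) = p * q := by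
    rw [zpow_add, ex_spec hp, ex_spec hq]
  rw [chi_eq hpq hj, chi_eq hp (ex_spec hp), chi_eq hq (ex_spec hq)]
  rw [← AddCircle.coe_add]
  congr 1
  push_cast
  ring

/-- The key 1-cocycle `H → (XX H → ℚ/ℤ)`. -/
noncomputable def sigmaHat (g : H) (x : XX H) : AddCircle (1:ℚ) := chi x.1 (cc g x.2)

lemma sigmaHat_one (x : XX H) : sigmaHat (1:H) x = 0 := by
  rw [sigmaHat, cc_one, chi_one]

lemma sigmaHat_mul (g h : H) (x : XX H) :
    sigmaHat (g * h) x = sigmaHat g x + sigmaHat h (g⁻¹ • x) := by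
  rw [sigmaHat, cc_mul, chi_mul (cc_mem _ _) (cc_mem _ _), add_comm]
  rfl

lemma sigmaHat_inv (g : H) (x : XX H) :
    sigmaHat g⁻¹ x = - sigmaHat g (g • x) := by
  have h := sigmaHat_mul g g⁻¹ (g • x)
  rw [mul_inv_cancel, sigmaHat_one, (show g⁻¹ • g • x = x from inv_smul_smul g x)] at h
  rw [eq_comm, neg_eq_iff_add_eq_zero]
  exact h.symm

/-- The Bieberbach subgroup of `W H`. -/
noncomputable def Gam (H : Type) [Group H] [Finite H] : Subgroup (W H) where
  carrier := { w | ∀ x : XX H, ((w.left.toAdd x : ℚ) : AddCircle (1:ℚ)) = sigmaHat w.right x }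
  one_mem' := fun x => by
    show (((1 : Multiplicative (XX H → ℚ)).toAdd x : ℚ) : AddCircle (1:ℚ)) = sigmaHat 1 x
    rw [sigmaHat_one]
    norm_num
  mul_mem' := by
    intro a b ha hb x
    show ((((a * b).left).toAdd x : ℚ) : AddCircle (1:ℚ)) = sigmaHat (a.right * b.right) x
    rw [mul_left]
    have : ((a.left * (phi H a.right) b.left).toAdd) x
        = a.left.toAdd x + b.left.toAdd (a.right⁻¹ • x) := rfl
    rw [this, AddCircle.coe_add, ha x, hb _, sigmaHat_mul]
  inv_mem' := by
    intro a ha x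
    show (((a⁻¹.left).toAdd x : ℚ) : AddCircle (1:ℚ)) = sigmaHat a.right⁻¹ x
    have h1 : (a⁻¹.left).toAdd x = - a.left.toAdd (a.right • x) := by
      rw [inv_left]
      show ((phi H a.right⁻¹) a.left⁻¹).toAdd x = _
      rw [phi_apply, inv_inv]
      rfl
    rw [h1, AddCircle.coe_neg, ha _, sigmaHat_inv]

/-- Projection to the holonomy group. -/
noncomputable def rho (H : Type) [Group H] [Finite H] : ↥(Gam H) →* H :=
  (rightHom).comp (Gam H).subtype

lemma rho_apply (w : ↥(Gam H)) : rho H w = w.val.right := rfl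

lemma rho_surjective : Function.Surjective (rho H) := by
  intro g
  refine ⟨⟨⟨ofAdd fun x => chiQ x.1 (cc g x.2), g⟩, ?_⟩, rfl⟩
  intro x
  rfl

lemma pow_left_apply (w : W H) (x : XX H) (hx : w.right⁻¹ • x = x) (n : ℕ) :
    ((w ^ n).left).toAdd x = (n : ℚ) * (w.left.toAdd x) := by
  have hx' : ∀ m : ℕ, (w.right ^ m)⁻¹ • x = x := by
    intro m
    induction m with
    | zero => simp; exact one_smul H x
    | succ m ih =>
      rw [pow_succ, mul_inv_rev, (show (w.right⁻¹ * (w.right ^ m)⁻¹) • x = w.right⁻¹ • (w.right ^ m)⁻¹ • x from mul_smul _ _ x), ih, hx]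
  induction n with
  | zero => simp
  | succ n ih =>
    rw [pow_succ]
    have : ((w ^ n * w).left).toAdd x
        = ((w ^ n).left).toAdd x + w.left.toAdd ((w ^ n).right⁻¹ • x) := rfl
    rw [this, ih]
    have hr : (w ^ n).right = w.right ^ n := by
      show rightHom (w ^ n) = w.right ^ n
      rw [map_pow]; rfl
    rw [hr, hx' n]
    push_cast
    ring

lemma fixed_point {g : H} :
    g⁻¹ • (QuotientGroup.mk (1:H) : H ⧸ zpowers g) = QuotientGroup.mk (1:H) := by
  rw [MulAction.Quotient.smul_mk]
  rw [QuotientGroup.eq]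
  simp [Subgroup.inv_mem_iff, Subgroup.mem_zpowers]

lemma cc_self (g : H) : cc g ((QuotientGroup.mk (1:H) : H ⧸ zpowers g)) = g⁻¹ := by
  unfold cc
  rw [fixed_point]
  have hmem : ((QuotientGroup.mk (1:H) : H ⧸ zpowers g)).out ∈ zpowers g := by
    have : (QuotientGroup.mk ((QuotientGroup.mk (1:H) : H ⧸ zpowers g)).out : H ⧸ zpowers g)
        = QuotientGroup.mk (1:H) := by rw [QuotientGroup.out_eq']
    have := QuotientGroup.eq.mp this
    simpa [Subgroup.inv_mem_iff] using this
  obtain ⟨j, hj⟩ := Subgroup.mem_zpowers_iff.mp hmem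
  rw [← hj]
  group

lemma chi_inv_ne_zero {g : H} (hg : g ≠ 1) : chi g g⁻¹ ≠ 0 := by
  have hk1 : 1 < orderOf g := by
    rcases Nat.lt_or_ge (orderOf g) 2 with h | h
    · interval_cases h' : orderOf g
      · exact absurd h' (orderOf_pos g).ne'
      · exact absurd (orderOf_eq_one_iff.mp h') hg
    · omega
  rw [chi_eq (Subgroup.inv_mem _ (Subgroup.mem_zpowers g)) (zpow_neg_one g)]
  intro h0
  obtain ⟨m, hm⟩ := (AddCircle.coe_eq_zero_iff (1:ℚ)).mp h0
  rw [zsmul_eq_mul, mul_one] at hm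
  have hk : ((orderOf g : ℚ)) ≠ 0 := by
    exact_mod_cast (orderOf_pos g).ne'
  have : (m : ℚ) * (orderOf g : ℚ) = -1 := by
    field_simp at hm
    push_cast at hm; linarith [hm]
  have hz : m * (orderOf g : ℤ) = -1 := by exact_mod_cast this
  have : (orderOf g : ℤ) ∣ -1 := Dvd.intro m (by linarith [hz])
  have := Int.le_of_dvd (by norm_num) ((dvd_neg).mp this)
  omega

lemma gam_torsionFree : ∀ g : ↥(Gam H), g ≠ 1 → ¬IsOfFinOrder g := by
  intro γ hγ hfin
  obtain ⟨n, hn, hpow⟩ := isOfFinOrder_iff_pow_eq_one.mp hfin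
  have hvpow : (γ.val) ^ n = 1 := by
    have := congrArg (Subtype.val) hpow
    simpa using this
  by_cases hg : γ.val.right = 1
  · -- pure translation
    apply hγ
    have hzero : ∀ x : XX H, γ.val.left.toAdd x = 0 := by
      intro x
      have hx : γ.val.right⁻¹ • x = x := by rw [hg]; simp; exact one_smul H x
      have h1 := pow_left_apply γ.val x hx n
      rw [hvpow] at h1
      have h0 : ((1 : W H).left).toAdd x = 0 := rfl
      rw [h0] at h1
      have : (n:ℚ) ≠ 0 := by exact_mod_cast hn.ne'
      field_simp at h1
      exact (mul_eq_zero.mp h1.symm).resolve_left this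
    ext : 1
    refine SemidirectProduct.ext ?_ ?_
    · show γ.val.left = 1
      have : γ.val.left.toAdd = 0 := funext hzero
      have h2 : γ.val.left = ofAdd 0 := by
        rw [← this]; rfl
      rw [h2]; rfl
    · exact hg
  · -- nontrivial holonomy: contradiction
    set g := γ.val.right with hgdef
    set x₀ : XX H := ⟨g, QuotientGroup.mk (1:H)⟩ with hx₀
    have hfix : g⁻¹ • x₀ = x₀ := by
      rw [xsmul_def]
      show (⟨g, g⁻¹ • (QuotientGroup.mk (1:H) : H ⧸ zpowers g)⟩ : XX H)
          = ⟨g, QuotientGroup.mk (1:H)⟩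
      rw [fixed_point]
    have h1 := pow_left_apply γ.val x₀ hfix n
    rw [hvpow] at h1
    have h0 : ((1 : W H).left).toAdd x₀ = 0 := rfl
    rw [h0] at h1
    have hnq : (n:ℚ) ≠ 0 := by exact_mod_cast hn.ne'
    have hv0 : γ.val.left.toAdd x₀ = 0 := by
      field_simp at h1; exact (mul_eq_zero.mp h1.symm).resolve_left hnq
    have hmem := γ.property x₀
    rw [hv0] at hmem
    have : (((0:ℚ)) : AddCircle (1:ℚ)) = 0 := by norm_num
    rw [this] at hmem
    have : sigmaHat g x₀ = chi g g⁻¹ := by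
      rw [sigmaHat, hx₀]
      show chi g (cc g (QuotientGroup.mk (1:H) : H ⧸ zpowers g)) = chi g g⁻¹
      rw [cc_self]
    rw [this] at hmem
    exact chi_inv_ne_zero hg hmem.symm

lemma ker_right {γ : ↥(Gam H)} (h : γ ∈ (rho H).ker) : γ.val.right = 1 :=
  MonoidHom.mem_ker.mp h

lemma gam_centralizer :
    Subgroup.centralizer (((rho H).ker : Subgroup ↥(Gam H)) : Set ↥(Gam H)) = (rho H).ker := by
  classical
  apply le_antisymm
  · intro γ hγ
    rw [Subgroup.mem_centralizer_iff] at hγ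
    rw [MonoidHom.mem_ker, rho_apply]
    by_contra hg
    set g := γ.val.right with hgdef
    set x₁ : XX H := ⟨1, QuotientGroup.mk (1:H)⟩ with hx₁
    have hbmem : (⟨ofAdd fun x => if x = x₁ then (1:ℚ) else 0, 1⟩ : W H) ∈ Gam H := by
      intro x
      show ((if x = x₁ then (1:ℚ) else 0 : ℚ) : AddCircle (1:ℚ)) = sigmaHat 1 x
      rw [sigmaHat_one]
      by_cases h : x = x₁
      · rw [if_pos h]
        exact (AddCircle.coe_eq_zero_iff (1:ℚ)).mpr ⟨1, by simp⟩
      · rw [if_neg h]; norm_num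
    set b : ↥(Gam H) := ⟨⟨ofAdd fun x => if x = x₁ then (1:ℚ) else 0, 1⟩, hbmem⟩ with hb
    have hbker : b ∈ (rho H).ker := by rw [MonoidHom.mem_ker]; rfl
    have hcomm := hγ b hbker
    have hneq : g • x₁ ≠ x₁ := by
      intro h
      rw [hx₁, xsmul_def] at h
      simp only at h
      injection h with h1 h2
      rw [MulAction.Quotient.smul_mk] at h2
      simp only [smul_eq_mul, mul_one] at h2
      have h4 := QuotientGroup.eq.mp h2
      rw [Subgroup.zpowers_one_eq_bot, Subgroup.mem_bot, mul_one, inv_eq_one] at h4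
      exact hg h4
    have hleft := congrArg (fun z : ↥(Gam H) => (z.val.left).toAdd (g • x₁)) hcomm
    have hL : ((b * γ).val.left).toAdd (g • x₁)
        = (if g • x₁ = x₁ then (1:ℚ) else 0) + γ.val.left.toAdd ((1:H)⁻¹ • (g • x₁)) := rfl
    have hR : ((γ * b).val.left).toAdd (g • x₁)
        = γ.val.left.toAdd (g • x₁) + (if g⁻¹ • (g • x₁) = x₁ then (1:ℚ) else 0) := rfl
    rw [hL, hR, if_neg hneq, inv_one, (show (1:H) • g • x₁ = g • x₁ from one_smul H _), (show g⁻¹ • g • x₁ = x₁ from inv_smul_smul g x₁), if_pos rfl] at hleft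
    linarith [hleft]
  · intro a ha
    rw [Subgroup.mem_centralizer_iff]
    intro b hb
    ext : 1
    show b.val * a.val = a.val * b.val
    refine SemidirectProduct.ext ?_ ?_
    · show b.val.left * (phi H b.val.right) a.val.left
        = a.val.left * (phi H a.val.right) b.val.left
      rw [ker_right ha, ker_right hb, map_one]
      simp [mul_comm]
    · show b.val.right * a.val.right = a.val.right * b.val.right
      rw [ker_right ha, ker_right hb]

lemma ker_int {γ : ↥(Gam H)} (h : γ ∈ (rho H).ker) (x : XX H) :
    ((⌊γ.val.left.toAdd x⌋ : ℚ)) = γ.val.left.toAdd x := by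
  have hmem := γ.property x
  rw [ker_right h, sigmaHat_one] at hmem
  obtain ⟨m, hm⟩ := (AddCircle.coe_eq_zero_iff (1:ℚ)).mp hmem
  rw [zsmul_eq_mul, mul_one] at hm
  rw [← hm, Int.floor_intCast]

/-- The lattice `A` is free abelian on `XX H`. -/
noncomputable def kerEquiv :
    Multiplicative (XX H → ℤ) ≃* ↥((rho H).ker) where
  toFun a := ⟨⟨⟨ofAdd fun x => ((a.toAdd x : ℤ) : ℚ), 1⟩, by
      intro x
      show (((a.toAdd x : ℤ) : ℚ) : AddCircle (1:ℚ)) = sigmaHat 1 x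
      rw [sigmaHat_one]
      exact (AddCircle.coe_eq_zero_iff (1:ℚ)).mpr ⟨a.toAdd x, by simp⟩⟩,
    by rw [MonoidHom.mem_ker]; rfl⟩
  invFun γ := ofAdd fun x => ⌊γ.val.val.left.toAdd x⌋
  left_inv a := by
    simp only [toAdd_ofAdd]
    show ofAdd (fun x => ⌊((a.toAdd x : ℤ) : ℚ)⌋) = a
    simp only [Int.floor_intCast]
    rfl
  right_inv γ := by
    ext : 1
    ext : 1
    refine SemidirectProduct.ext ?_ ?_
    · show ofAdd (fun x => ((⌊γ.val.val.left.toAdd x⌋ : ℤ) : ℚ)) = γ.val.val.left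
      have : (fun x => ((⌊γ.val.val.left.toAdd x⌋ : ℤ) : ℚ)) = γ.val.val.left.toAdd := by
        funext x
        exact ker_int γ.property x
      rw [this]
      rfl
    · exact (ker_right γ.property).symm
  map_mul' a b := by
    ext : 1
    ext : 1
    refine SemidirectProduct.ext ?_ ?_
    · show ofAdd (fun x => (((a * b).toAdd x : ℤ) : ℚ))
        = (ofAdd fun x => ((a.toAdd x : ℤ) : ℚ))
          * (phi H 1) (ofAdd fun x => ((b.toAdd x : ℤ) : ℚ))
      rw [map_one]
      show ofAdd (fun x => (((a.toAdd + b.toAdd) x : ℤ) : ℚ))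
        = (ofAdd fun x => ((a.toAdd x : ℤ) : ℚ)) * (ofAdd fun x => ((b.toAdd x : ℤ) : ℚ))
      have : (fun x => (((a.toAdd + b.toAdd) x : ℤ) : ℚ))
          = (fun x => ((a.toAdd x : ℤ) : ℚ)) + (fun x => ((b.toAdd x : ℤ) : ℚ)) := by
        funext x
        show ((a.toAdd x + b.toAdd x : ℤ) : ℚ) = ((a.toAdd x : ℤ) : ℚ) + ((b.toAdd x : ℤ) : ℚ)
        push_cast
        ring
      rw [this]
      rfl
    · show (1:H) = 1 * 1
      rw [mul_one]

lemma gam_finiteIndex : ((rho H).ker).FiniteIndex := by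
  constructor
  rw [Subgroup.index_ker]
  exact Nat.card_pos.ne'

noncomputable def reindexAdd (H : Type) [Group H] [Finite H] :
    (XX H → ℤ) ≃+ (Fin (Nat.card (XX H)) → ℤ) :=
  { Equiv.piCongrLeft' (fun _ => ℤ) (Finite.equivFin (XX H)) with
    map_add' := fun _ _ => rfl }

end BieberbachAux

namespace BieberbachAux

noncomputable def build (H : Type) [Group H] [Finite H] :
    BieberbachGroup (Nat.card (XX H)) where
  carrier := ↥(Gam H)
  torsionFree := gam_torsionFree
  A := (rho H).ker
  normal := MonoidHom.normal_ker _
  freeAbelianRank :=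
    ⟨(kerEquiv.symm).trans (AddEquiv.toMultiplicative (reindexAdd H))⟩
  finiteIndex := gam_finiteIndex
  maxAbelian := gam_centralizer

end BieberbachAux

/-- **Realization theorem (Auslander–Kuranishi).**  Every finite group `G` is the holonomy
group of some flat manifold: there exist `n : ℕ` and a Bieberbach group `Γ` of dimension `n`
whose holonomy group `Γ/A` is isomorphic to `G`. -/
theorem exists_bieberbach_with_holonomy (G : Type*) [Group G] [Finite G] :
    ∃ (n : ℕ) (B : BieberbachGroup n), Nonempty ((B.carrier ⧸ B.A) ≃* G) := by
  let H : Type := Shrink.{0} G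
  haveI : Finite H := Finite.of_equiv G (equivShrink.{0} G)
  refine ⟨Nat.card (BieberbachAux.XX H), BieberbachAux.build H, ?_⟩
  have qe := QuotientGroup.quotientKerEquivOfSurjective (BieberbachAux.rho H)
    BieberbachAux.rho_surjective
  exact ⟨qe.trans (Shrink.mulEquiv)⟩
end
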